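/- arXiv:2304.03924 — 2 statements merged into one kernel-verified Lean document; each statement's English description precedes it below -/
import Mathlib

section
/- Under assumption (A), the empirical estimator of the semi-Markov kernel is strongly consistent: for every initial state i₀ ∈ E, almost surely under P_{i₀}, q̂_{ij}(k,M) → q_{ij}(k) as M → ∞ for every (i,j,k) ∈ Ẽ := E×E×ℕ. -/
set_option linter.unusedSectionVars false
set_option maxHeartbeats 1000000


open MeasureTheory Filter Topology Finset ProbabilityTheory
open scoped Classical ENNReal

noncomputable section

namespace SMCPaper

variable {E : Type} [Fintype E] [DecidableEq E] {Ω : Type} [MeasurableSpace Ω]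

/-- `q` is a (discrete-time) semi-Markov kernel on the finite state space `E`:
nonnegative entries, `q i j 0 = 0`, and total mass `1` from every state. -/
def IsSemiMarkovKernel (q : E → E → ℕ → ℝ) : Prop :=
  (∀ i j k, 0 ≤ q i j k) ∧ (∀ i j, q i j 0 = 0) ∧
    ∀ i, HasSum (fun p : E × ℕ => q i p.1 p.2) 1

/-- The sojourn times `X n = S n − S (n−1)` (so `X 0 = 0` when `S 0 = 0`). -/
def Xproc (S : ℕ → Ω → ℕ) (n : ℕ) (ω : Ω) : ℕ := S n ω - S (n - 1) ω

/-- `(J, S)` is a Markov renewal chain with semi-Markov kernel `q` under the family of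
probability measures `P i₀` (the chain starting at `i₀`):  `J 0 = i₀`, `S 0 = 0` a.s., and
the process `(J, X)` is a time-homogeneous Markov chain with transitions
`P(J_{n+1} = j, X_{n+1} = k | J_n = i, past) = q i j k`. -/
def IsMarkovRenewalChain (P : E → Measure Ω) (J : ℕ → Ω → E) (S : ℕ → Ω → ℕ)
    (q : E → E → ℕ → ℝ) : Prop :=
  (∀ i, IsProbabilityMeasure (P i)) ∧
  (∀ n i, MeasurableSet {ω | J n ω = i}) ∧
  (∀ n k, MeasurableSet {ω | S n ω = k}) ∧
  (∀ i₀, P i₀ {ω | J 0 ω = i₀ ∧ S 0 ω = 0} = 1) ∧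
  (∀ i₀ (n : ℕ) (js : ℕ → E) (xs : ℕ → ℕ),
    P i₀ ({ω | J (n+1) ω = js (n+1) ∧ Xproc S (n+1) ω = xs (n+1)} ∩
        {ω | ∀ l ≤ n, J l ω = js l ∧ Xproc S l ω = xs l}) =
      ENNReal.ofReal (q (js n) (js (n+1)) (xs (n+1))) *
        P i₀ {ω | ∀ l ≤ n, J l ω = js l ∧ Xproc S l ω = xs l})

/-- First hitting time (after time `0`) of the state `j` by the embedded chain `J`. -/
def tau (J : ℕ → Ω → E) (j : E) (ω : Ω) : ℕ := sInf {n | 1 ≤ n ∧ J n ω = j}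

/-- Mean recurrence time `μ_{ii} = E_i[S_{τ_i}]`. -/
def mrt (P : E → Measure Ω) (J : ℕ → Ω → E) (S : ℕ → Ω → ℕ) (i : E) : ℝ :=
  ∫ ω, (S (tau J i ω) ω : ℝ) ∂(P i)

/-- Assumption (A): irreducibility of the embedded chain, aperiodicity of the Markov
renewal chain, and positive recurrence. -/
def AssumptionA (P : E → Measure Ω) (J : ℕ → Ω → E) (S : ℕ → Ω → ℕ) : Prop :=
  (∀ i j : E, 0 < P i {ω | ∃ n, 1 ≤ n ∧ J n ω = j}) ∧
  (∀ i : E, ∀ d : ℕ,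
      (∀ k, 0 < P i {ω | S (tau J i ω) ω = k} → d ∣ k) → d = 1) ∧
  (∀ i : E, (∀ᵐ ω ∂(P i), ∃ n, 1 ≤ n ∧ J n ω = i) ∧
      Integrable (fun ω => (S (tau J i ω) ω : ℝ)) (P i))

/-- `N(M)`: the number of jumps of the Markov renewal chain up to time `M`. -/
def Ncnt (S : ℕ → Ω → ℕ) (M : ℕ) (ω : Ω) : ℕ := sSup {n | S n ω ≤ M}

/-- `N_i(M)`: the number of visits of the embedded chain to `i` before time `M`. -/
def Nvis (J : ℕ → Ω → E) (S : ℕ → Ω → ℕ) (i : E) (M : ℕ) (ω : Ω) : ℕ :=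
  ∑ n ∈ Finset.Icc 1 (Ncnt S M ω), if J (n-1) ω = i then 1 else 0

/-- The empirical (nonparametric) estimator `q̂(M)` of the semi-Markov kernel. -/
def qhat (J : ℕ → Ω → E) (S : ℕ → Ω → ℕ) (M : ℕ) (ω : Ω) (i j : E) (k : ℕ) : ℝ :=
  (∑ n ∈ Finset.Icc 1 (Ncnt S M ω),
      if J (n-1) ω = i ∧ J n ω = j ∧ Xproc S n ω = k then (1:ℝ) else 0) /
    (Nvis J S i M ω : ℝ)

/-- The entry of a matrix sequence at `e = (i, j, k)`. -/
def entry (A : E → E → ℕ → ℝ) (e : E × E × ℕ) : ℝ := A e.1 e.2.1 e.2.2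

/-- Matrix convolution of matrix sequences. -/
def mconv (A B : E → E → ℕ → ℝ) : E → E → ℕ → ℝ := fun i j k =>
  ∑ l ∈ Finset.range (k+1), ∑ u, A i u l * B u j (k - l)

/-- Convolution of scalar sequences. -/
def sconv (a b : ℕ → ℝ) : ℕ → ℝ := fun k => ∑ l ∈ Finset.range (k+1), a l * b (k - l)

/-- The identity `δI` for matrix convolution. -/
def deltaI : E → E → ℕ → ℝ := fun i j k => if i = j ∧ k = 0 then 1 else 0

/-- `n`-fold matrix convolution power. -/
def mpow (A : E → E → ℕ → ℝ) : ℕ → E → E → ℕ → ℝ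
  | 0 => deltaI
  | n + 1 => mconv A (mpow A n)

/-- The convolution inverse `(δI − A)^{(−1)} = ∑_{n ≥ 0} A^{(n)}`. -/
def psiOf (A : E → E → ℕ → ℝ) : E → E → ℕ → ℝ := fun i j k => ∑' n, mpow A n i j k

/-- The operator `S`: `(S A)_{ij}(k) = 1{i=j} ∑_{j'} ∑_{k' > k} A_{ij'}(k')`. -/
def Sop (A : E → E → ℕ → ℝ) : E → E → ℕ → ℝ := fun i j k =>
  if i = j then ∑' p : E × ℕ, if k < p.2 then A i p.1 p.2 else 0 else 0

/-- Cumulative sum of a scalar sequence, `(cumul a) k = ∑_{l ≤ k} a l`. -/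
def cumul (a : ℕ → ℝ) (k : ℕ) : ℝ := ∑ l ∈ Finset.range (k+1), a l

/-- `H_j(k) = ∑_{j'} ∑_{k' ≤ k} q_{jj'}(k')`, the sojourn time c.d.f. in state `j`. -/
def Hseq (q : E → E → ℕ → ℝ) (j : E) (k : ℕ) : ℝ :=
  ∑ j', ∑ l ∈ Finset.range (k+1), q j j' l

/-- The matrix sequence `δ^{et}` with entry `1` at `et` and `0` elsewhere. -/
def deltaM (et : E × E × ℕ) : E → E → ℕ → ℝ := fun i j k => if (i, j, k) = et then 1 else 0

/-- The matrix sequence `q^{it}` with `q^{it}_{ij}(k) = 1{i = it} q_{ij}(k)`. -/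
def qres (q : E → E → ℕ → ℝ) (it : E) : E → E → ℕ → ℝ :=
  fun i j k => if i = it then q i j k else 0

/-- The semi-Markov chain `Z_k = J_{N(k)}` associated to `(J, S)`. -/
def Zproc (J : ℕ → Ω → E) (S : ℕ → Ω → ℕ) (k : ℕ) (ω : Ω) : E := J (Ncnt S k ω) ω

/-- The distribution matrix sequence `P_{ij}(k) = P_i(Z_k = j)` of the semi-Markov chain. -/
def Pdist (P : E → Measure Ω) (J : ℕ → Ω → E) (S : ℕ → Ω → ℕ) (i j : E) (k : ℕ) : ℝ :=
  (P i {ω | Zproc J S k ω = j}).toReal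

/-- The estimator `P̂(M) = ψ̂(M) * S q̂(M)` of the distribution matrix sequence. -/
def Phat (J : ℕ → Ω → E) (S : ℕ → Ω → ℕ) (M : ℕ) (ω : Ω) : E → E → ℕ → ℝ :=
  mconv (psiOf (qhat J S M ω)) (Sop (qhat J S M ω))

/-- The reliability vector sequence `R_i(k) = P_i(T_D > k)`, for `i ∈ U`,
where `D = Uᶜ` and `T_D` is the first entrance time of `Z` into `D`. -/
def Rrel (P : E → Measure Ω) (J : ℕ → Ω → E) (S : ℕ → Ω → ℕ) (U : Finset E)
    (i : E) (k : ℕ) : ℝ :=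
  (P i {ω | ∀ l ≤ k, Zproc J S l ω ∈ U}).toReal

/-- Restriction of a matrix sequence to `Ũ = U × U × ℕ` (extended by `0`). -/
def restrictUU (U : Finset E) (A : E → E → ℕ → ℝ) : E → E → ℕ → ℝ :=
  fun i j k => if i ∈ U ∧ j ∈ U then A i j k else 0

/-- Convolution of a matrix sequence with a vector sequence. -/
def mvconv (A : E → E → ℕ → ℝ) (v : E → ℕ → ℝ) : E → ℕ → ℝ := fun i k =>
  ∑ l ∈ Finset.range (k+1), ∑ u, A i u l * v u (k - l)

/-- The diagonal `(A)_U` of a matrix sequence, as a vector sequence. -/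
def diagOf (A : E → E → ℕ → ℝ) : E → ℕ → ℝ := fun i k => A i i k

/-- The estimator `R̂(M) = ψ̂_UU(M) * (S q̂(M))_U` of the reliability vector sequence. -/
def Rhat (J : ℕ → Ω → E) (S : ℕ → Ω → ℕ) (U : Finset E) (M : ℕ) (ω : Ω) : E → ℕ → ℝ :=
  mvconv (psiOf (restrictUU U (qhat J S M ω))) (diagOf (Sop (qhat J S M ω)))

/-- `μG` is the law of a centered Gaussian family indexed by `ι` with covariance `V`:
every finite linear combination of coordinates has a centered normal distribution with the
appropriate variance. -/
def IsCenteredGaussianLaw {ι : Type} (μG : Measure (ι → ℝ)) (V : ι → ι → ℝ) : Prop :=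
  ∀ a : ι →₀ ℝ,
    Measure.map (fun x => ∑ e ∈ a.support, a e * x e) μG =
      gaussianReal 0
        (Real.toNNReal (∑ e ∈ a.support, ∑ e' ∈ a.support, a e * V e e' * a e'))

/-- `(Z_e)_{e ∈ ι}` is a centered Gaussian family with covariance `V` under `P`. -/
def IsCenteredGaussianFamily {ι : Type} (P : Measure Ω) (Z : ι → Ω → ℝ)
    (V : ι → ι → ℝ) : Prop :=
  (∀ e, Measurable (Z e)) ∧
  ∀ a : ι →₀ ℝ,
    Measure.map (fun ω => ∑ e ∈ a.support, a e * Z e ω) P =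
      gaussianReal 0
        (Real.toNNReal (∑ e ∈ a.support, ∑ e' ∈ a.support, a e * V e e' * a e'))

/-- The covariance matrix `V^q` of the CLT for `q̂`, with `μr i = μ_{ii}`. -/
def Vq (q : E → E → ℕ → ℝ) (μr : E → ℝ) : (E × E × ℕ) → (E × E × ℕ) → ℝ := fun e e' =>
  μr e.1 * (if e.1 = e'.1 then 1 else 0) * entry q e *
    ((if e.2.1 = e'.2.1 ∧ e.2.2 = e'.2.2 then 1 else 0) - entry q e')


/-- trajectory -/
def traj (J : ℕ → Ω → E) (S : ℕ → Ω → ℕ) (ω : Ω) (l : ℕ) : E × ℕ := (J l ω, Xproc S l ω)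

/-- cylinder event -/
def cylE (J : ℕ → Ω → E) (S : ℕ → Ω → ℕ) (c : ℕ → E × ℕ) (n : ℕ) : Set Ω :=
  {ω | ∀ l ≤ n, J l ω = (c l).1 ∧ Xproc S l ω = (c l).2}

lemma Xproc_zero (S : ℕ → Ω → ℕ) (ω : Ω) : Xproc S 0 ω = 0 := by
  simp [Xproc]

lemma mem_cylE_iff {J : ℕ → Ω → E} {S : ℕ → Ω → ℕ} {c : ℕ → E × ℕ} {n : ℕ} {ω : Ω} :
    ω ∈ cylE J S c n ↔ ∀ l ≤ n, traj J S ω l = c l := by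
  simp [cylE, traj, Prod.ext_iff]

/-- word type -/
abbrev Wd (E : Type) (n : ℕ) := Fin (n + 1) → E × ℕ

def extW {n : ℕ} (c : Wd E n) : ℕ → E × ℕ := fun l => c ⟨min l n, by omega⟩

lemma extW_eq {n : ℕ} (c : Wd E n) {l : ℕ} (hl : l ≤ n) :
    extW c l = c ⟨l, by omega⟩ := by
  simp [extW, Nat.min_eq_left hl]

/-- restriction of a trajectory to a word -/
def resW (n : ℕ) (w : ℕ → E × ℕ) : Wd E n := fun l => w l.1

lemma extW_resW {n : ℕ} (w : ℕ → E × ℕ) {l : ℕ} (hl : l ≤ n) :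
    extW (resW n w) l = w l := by
  rw [extW_eq _ hl]; rfl

section Meas

variable {J : ℕ → Ω → E} {S : ℕ → Ω → ℕ}
variable (hJ : ∀ n i, MeasurableSet {ω | J n ω = i})
variable (hS : ∀ n k, MeasurableSet {ω | S n ω = k})

include hS in
lemma meas_X (n k : ℕ) : MeasurableSet {ω | Xproc S n ω = k} := by
  have : {ω | Xproc S n ω = k} =
      ⋃ (a : ℕ) (b : ℕ) (_ : a - b = k), ({ω | S n ω = a} ∩ {ω | S (n-1) ω = b}) := by
    ext ω
    simp only [Set.mem_setOf_eq, Set.mem_iUnion, Set.mem_inter_iff]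
    constructor
    · intro h; exact ⟨S n ω, S (n-1) ω, h, rfl, rfl⟩
    · rintro ⟨a, b, hab, ha, hb⟩; rw [Xproc, ha, hb, hab]
  rw [this]
  exact MeasurableSet.iUnion fun a => MeasurableSet.iUnion fun b =>
    MeasurableSet.iUnion fun _ => (hS n a).inter (hS (n-1) b)

include hJ hS in
lemma meas_cylE (c : ℕ → E × ℕ) (n : ℕ) : MeasurableSet (cylE J S c n) := by
  have : cylE J S c n = ⋂ (l : ℕ) (_ : l ≤ n),
      ({ω | J l ω = (c l).1} ∩ {ω | Xproc S l ω = (c l).2}) := by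
    ext ω; simp only [cylE, Set.mem_setOf_eq, Set.mem_iInter, Set.mem_inter_iff]
  rw [this]
  exact MeasurableSet.iInter fun l => MeasurableSet.iInter fun _ =>
    (hJ l (c l).1).inter (meas_X hS l (c l).2)

end Meas

/-- Predicate determined by coordinates `≤ n`. -/
def DetBy (n : ℕ) (Φ : (ℕ → E × ℕ) → Prop) : Prop :=
  ∀ w w' : ℕ → E × ℕ, (∀ l ≤ n, w l = w' l) → (Φ w ↔ Φ w')

section Decomp

variable {J : ℕ → Ω → E} {S : ℕ → Ω → ℕ}

lemma det_event_eq_iUnion {n : ℕ} {Φ : (ℕ → E × ℕ) → Prop} (hΦ : DetBy n Φ) :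
    {ω | Φ (traj J S ω)} = ⋃ (c : {c : Wd E n // Φ (extW c)}), cylE J S (extW c.1) n := by
  ext ω
  simp only [Set.mem_setOf_eq, Set.mem_iUnion]
  constructor
  · intro h
    refine ⟨⟨resW n (traj J S ω), ?_⟩, ?_⟩
    · exact (hΦ _ _ (fun l hl => (extW_resW _ hl).symm)).1 h
    · rw [mem_cylE_iff]; exact fun l hl => (extW_resW _ hl).symm
  · rintro ⟨⟨c, hc⟩, hω⟩
    rw [mem_cylE_iff] at hω
    exact (hΦ _ _ hω).2 hc

lemma disjoint_cylW {n : ℕ} {c c' : Wd E n} (h : c ≠ c') :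
    Disjoint (cylE J S (extW c) n) (cylE J S (extW c') n) := by
  rw [Set.disjoint_left]
  intro ω h1 h2
  rw [mem_cylE_iff] at h1 h2
  apply h
  funext l
  have hl : l.1 ≤ n := by omega
  have h1' := h1 l.1 hl
  have h2' := h2 l.1 hl
  rw [extW_eq _ hl] at h1' h2'
  simpa [Fin.eta] using h1'.symm.trans h2'

end Decomp


section Prob

variable {J : ℕ → Ω → E} {S : ℕ → Ω → ℕ} {q : E → E → ℕ → ℝ} {P : E → Measure Ω}

/-- step weight -/
def stepP (q : E → E → ℕ → ℝ) (i : E) (e : E × ℕ) : ℝ≥0∞ := ENNReal.ofReal (q i e.1 e.2)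

variable (hJ : ∀ n i, MeasurableSet {ω | J n ω = i})
variable (hS : ∀ n k, MeasurableSet {ω | S n ω = k})

include hJ hS in
lemma meas_det {n : ℕ} {Φ : (ℕ → E × ℕ) → Prop} (hΦ : DetBy n Φ) :
    MeasurableSet {ω | Φ (traj J S ω)} := by
  rw [det_event_eq_iUnion hΦ]
  exact MeasurableSet.iUnion fun c => meas_cylE hJ hS _ _

include hJ hS in
lemma prob_det (x : E) {n : ℕ} {Φ : (ℕ → E × ℕ) → Prop} (hΦ : DetBy n Φ) :
    P x {ω | Φ (traj J S ω)} =
      ∑' c : {c : Wd E n // Φ (extW c)}, P x (cylE J S (extW c.1) n) := by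
  rw [det_event_eq_iUnion hΦ]
  exact measure_iUnion
    (fun c c' hne => disjoint_cylW (fun hc => hne (Subtype.ext hc)))
    (fun c => meas_cylE hJ hS _ _)


variable (hmc : ∀ (i₀ : E) (n : ℕ) (js : ℕ → E) (xs : ℕ → ℕ),
    P i₀ ({ω | J (n+1) ω = js (n+1) ∧ Xproc S (n+1) ω = xs (n+1)} ∩
        {ω | ∀ l ≤ n, J l ω = js l ∧ Xproc S l ω = xs l}) =
      ENNReal.ofReal (q (js n) (js (n+1)) (xs (n+1))) *
        P i₀ {ω | ∀ l ≤ n, J l ω = js l ∧ Xproc S l ω = xs l})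

include hJ hS hmc in
lemma one_step (x : E) {t : ℕ} {Φ : (ℕ → E × ℕ) → Prop} (hΦ : DetBy t Φ) {i : E}
    (hΦi : ∀ w, Φ w → (w t).1 = i) (e : E × ℕ) :
    P x ({ω | Φ (traj J S ω)} ∩ {ω | traj J S ω (t+1) = e}) =
      stepP q i e * P x {ω | Φ (traj J S ω)} := by
  have hstep : ∀ c : {c : Wd E t // Φ (extW c)},
      P x (cylE J S (extW c.1) t ∩ {ω | traj J S ω (t+1) = e}) =
        stepP q i e * P x (cylE J S (extW c.1) t) := by
    rintro ⟨c, hc⟩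
    have h := hmc x t (fun l => if l ≤ t then (extW c l).1 else e.1)
      (fun l => if l ≤ t then (extW c l).2 else e.2)
    simp only [if_neg (by omega : ¬ t + 1 ≤ t), if_pos (le_refl t)] at h
    have h1 : {ω | J (t+1) ω = e.1 ∧ Xproc S (t+1) ω = e.2} = {ω | traj J S ω (t+1) = e} := by
      ext ω; simp [traj, Prod.ext_iff]
    have h2 : {ω | ∀ l ≤ t, J l ω = (if l ≤ t then (extW c l).1 else e.1) ∧
        Xproc S l ω = (if l ≤ t then (extW c l).2 else e.2)} = cylE J S (extW c) t := by
      ext ω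
      simp only [cylE, Set.mem_setOf_eq]
      constructor
      · intro hh l hl; have := hh l hl; rwa [if_pos hl, if_pos hl] at this
      · intro hh l hl; rw [if_pos hl, if_pos hl]; exact hh l hl
    rw [h1, h2] at h
    rw [Set.inter_comm, h, hΦi _ hc]
    rfl
  have hmB : MeasurableSet {ω | traj J S ω (t+1) = e} := by
    have : {ω | traj J S ω (t+1) = e} = {ω | J (t+1) ω = e.1} ∩ {ω | Xproc S (t+1) ω = e.2} := by
      ext ω; simp [traj, Prod.ext_iff]
    rw [this]; exact (hJ _ _).inter (meas_X hS _ _)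
  have hdis : Pairwise (Function.onFun Disjoint
      (fun c : {c : Wd E t // Φ (extW c)} => cylE J S (extW c.1) t)) :=
    fun c c' hne => disjoint_cylW (fun hcc => hne (Subtype.ext hcc))
  rw [det_event_eq_iUnion (J := J) (S := S) hΦ, Set.iUnion_inter]
  rw [measure_iUnion
      (fun c c' hne => Disjoint.mono Set.inter_subset_left Set.inter_subset_left (hdis hne))
      (fun c => (meas_cylE hJ hS _ _).inter hmB),
    measure_iUnion hdis (fun c => meas_cylE hJ hS _ _), ← ENNReal.tsum_mul_left]
  exact tsum_congr hstep


/-- future predicate determined by coordinates `1..m` -/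
def DetFut (m : ℕ) (V : (ℕ → E × ℕ) → Prop) : Prop :=
  ∀ w w' : ℕ → E × ℕ, (∀ r, 1 ≤ r → r ≤ m → w r = w' r) → (V w ↔ V w')

/-- shifted future event -/
def futE (J : ℕ → Ω → E) (S : ℕ → Ω → ℕ) (V : (ℕ → E × ℕ) → Prop) (s : ℕ) : Set Ω :=
  {ω | V (fun r => traj J S ω (s + r))}

lemma detBy_shift {m s : ℕ} {V : (ℕ → E × ℕ) → Prop} (hV : DetFut m V) :
    DetBy (s + m) (fun w => V (fun r => w (s + r))) := by
  intro w w' hww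
  exact hV _ _ (fun r h1 hr => hww (s + r) (by omega))

lemma futE_eq_det (J : ℕ → Ω → E) (S : ℕ → Ω → ℕ) (V : (ℕ → E × ℕ) → Prop) (s : ℕ) :
    futE J S V s = {ω | (fun w => V (fun r => w (s + r))) (traj J S ω)} := rfl

variable (hP : ∀ i, IsProbabilityMeasure (P i))
variable (h0 : ∀ i₀ : E, P i₀ {ω | J 0 ω = i₀ ∧ S 0 ω = 0} = 1)

include hP h0 in
lemma probJ0 (x : E) : P x {ω | J 0 ω = x} = 1 := by
  have := hP x
  refine le_antisymm prob_le_one ?_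
  rw [← h0 x]
  exact measure_mono (fun ω h => h.1)

include hJ hP h0 in
lemma null_J0 (x : E) : P x {ω | J 0 ω = x}ᶜ = 0 := by
  have := hP x
  have h1 := probJ0 (P := P) (J := J) hP h0 x
  rwa [← prob_compl_eq_zero_iff (hJ 0 x)] at h1

/-- successor future predicate -/
def Vnext (V : (ℕ → E × ℕ) → Prop) (e : E × ℕ) : (ℕ → E × ℕ) → Prop :=
  fun w => V (fun r => if r ≤ 1 then (if r = 1 then e else w 0) else w (r - 1))

lemma detFut_Vnext {m : ℕ} {V : (ℕ → E × ℕ) → Prop} (hV : DetFut (m+1) V) (e : E × ℕ) :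
    DetFut m (Vnext V e) := by
  intro w w' hww
  refine hV _ _ ?_
  intro r h1 hr
  by_cases h : r ≤ 1
  · have hr1 : r = 1 := by omega
    simp [hr1]
  · simp only [if_neg h]
    exact hww (r-1) (by omega) (by omega)

lemma futE_decomp {J : ℕ → Ω → E} {S : ℕ → Ω → ℕ} {m : ℕ} {V : (ℕ → E × ℕ) → Prop}
    (hV : DetFut (m+1) V) (s : ℕ) :
    futE J S V s = ⋃ e : E × ℕ,
      ({ω | traj J S ω (s+1) = e} ∩ futE J S (Vnext V e) (s+1)) := by
  ext ω
  simp only [futE, Set.mem_iUnion, Set.mem_inter_iff, Set.mem_setOf_eq]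
  have key : ∀ e : E × ℕ, traj J S ω (s+1) = e →
      (V (fun r => traj J S ω (s + r)) ↔ Vnext V e (fun r => traj J S ω (s + 1 + r))) := by
    intro e he
    refine hV _ _ ?_
    intro r h1 hr
    by_cases h : r ≤ 1
    · have : r = 1 := by omega
      subst this
      simp [he.symm]
    · simp only [if_neg h]
      have : s + 1 + (r - 1) = s + r := by omega
      rw [this]
  constructor
  · intro h
    exact ⟨traj J S ω (s+1), rfl, (key _ rfl).1 h⟩
  · rintro ⟨e, he, hv⟩
    exact (key e he).2 hv


include hJ hS in
lemma meas_trajEq (s : ℕ) (e : E × ℕ) : MeasurableSet {ω | traj J S ω s = e} := by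
  have : {ω | traj J S ω s = e} = {ω | J s ω = e.1} ∩ {ω | Xproc S s ω = e.2} := by
    ext ω; simp [traj, Prod.ext_iff]
  rw [this]; exact (hJ _ _).inter (meas_X hS _ _)

include hJ hS in
lemma meas_futE {m : ℕ} {V : (ℕ → E × ℕ) → Prop} (hV : DetFut m V) (s : ℕ) :
    MeasurableSet (futE J S V s) := by
  rw [futE_eq_det]; exact meas_det hJ hS (detBy_shift hV)

lemma futE_zero_eq {V : (ℕ → E × ℕ) → Prop} :
    futE J S V 0 = {ω | V (traj J S ω)} := by
  ext ω; simp [futE]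

include hJ hS hmc hP h0 in
lemma master : ∀ (m : ℕ) {V : (ℕ → E × ℕ) → Prop}, DetFut m V →
    ∀ (x : E) (t : ℕ) (Φ : (ℕ → E × ℕ) → Prop), DetBy t Φ →
    ∀ (i : E), (∀ w, Φ w → (w t).1 = i) →
    P x ({ω | Φ (traj J S ω)} ∩ futE J S V t) =
      P x {ω | Φ (traj J S ω)} * P i (futE J S V 0) := by
  intro m
  induction m with
  | zero =>
    intro V hV x t Φ hΦ i hΦi
    by_cases h : V (fun _ => (i, 0))
    · have huniv : ∀ s : ℕ, futE J S V s = Set.univ := by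
        intro s
        ext ω
        simp only [futE, Set.mem_setOf_eq, Set.mem_univ, iff_true]
        exact (hV _ _ (fun r h1 hr => by omega)).2 h
      rw [huniv, huniv, Set.inter_univ]
      have := hP i
      simp
    · have hemp : ∀ s : ℕ, futE J S V s = (∅ : Set Ω) := by
        intro s
        ext ω
        simp only [futE, Set.mem_setOf_eq, Set.mem_empty_iff_false, iff_false]
        intro hvv
        exact h ((hV _ _ (fun r h1 hr => by omega)).1 hvv)
      rw [hemp, hemp, Set.inter_empty]
      simp
  | succ m ih =>
    intro V hV x t Φ hΦ i hΦi
    -- common facts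
    have hdisj : ∀ s : ℕ, Pairwise (Function.onFun Disjoint (fun e : E × ℕ =>
        {ω | traj J S ω (s+1) = e} ∩ futE J S (Vnext V e) (s+1))) := by
      intro s e e' hne
      refine Disjoint.mono Set.inter_subset_left Set.inter_subset_left ?_
      rw [Set.disjoint_left]
      intro ω h1 h2
      exact hne (h1.symm.trans h2)
    have hmeas : ∀ s : ℕ, ∀ e : E × ℕ, MeasurableSet
        ({ω | traj J S ω (s+1) = e} ∩ futE J S (Vnext V e) (s+1)) := fun s e =>
      (meas_trajEq hJ hS _ _).inter (meas_futE hJ hS (detFut_Vnext hV e) _)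
    -- LHS
    have hL : P x ({ω | Φ (traj J S ω)} ∩ futE J S V t) =
        ∑' e : E × ℕ, P x {ω | Φ (traj J S ω)} *
          (stepP q i e * P e.1 (futE J S (Vnext V e) 0)) := by
      rw [futE_decomp hV t, Set.inter_iUnion]
      rw [measure_iUnion
        (fun e e' hne => Disjoint.mono Set.inter_subset_right Set.inter_subset_right
          (hdisj t hne))
        (fun e => (meas_det hJ hS hΦ).inter (hmeas t e))]
      refine tsum_congr fun e => ?_
      have hΦe : DetBy (t+1) (fun w => Φ w ∧ w (t+1) = e) := by
        intro w w' hww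
        show Φ w ∧ w (t+1) = e ↔ Φ w' ∧ w' (t+1) = e
        rw [hΦ w w' (fun l hl => hww l (by omega)), hww (t+1) (le_refl _)]
      have hset : {ω | Φ (traj J S ω)} ∩ {ω | traj J S ω (t+1) = e} =
          {ω | (fun w => Φ w ∧ w (t+1) = e) (traj J S ω)} := rfl
      calc P x ({ω | Φ (traj J S ω)} ∩ ({ω | traj J S ω (t+1) = e} ∩
              futE J S (Vnext V e) (t+1)))
          = P x ({ω | (fun w => Φ w ∧ w (t+1) = e) (traj J S ω)} ∩
              futE J S (Vnext V e) (t+1)) := by rw [← Set.inter_assoc, hset]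
        _ = P x {ω | (fun w => Φ w ∧ w (t+1) = e) (traj J S ω)} *
              P e.1 (futE J S (Vnext V e) 0) := by
            exact ih (detFut_Vnext hV e) x (t+1) _ hΦe e.1 (fun w hw => by
              rw [hw.2])
        _ = (stepP q i e * P x {ω | Φ (traj J S ω)}) *
              P e.1 (futE J S (Vnext V e) 0) := by
            rw [← hset, one_step hJ hS hmc x hΦ hΦi e]
        _ = P x {ω | Φ (traj J S ω)} *
              (stepP q i e * P e.1 (futE J S (Vnext V e) 0)) := by ring
    -- RHS
    have hR : P i (futE J S V 0) =
        ∑' e : E × ℕ, stepP q i e * P e.1 (futE J S (Vnext V e) 0) := by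
      rw [futE_decomp hV 0]
      rw [measure_iUnion (hdisj 0) (hmeas 0)]
      refine tsum_congr fun e => ?_
      have hins : P i ({ω | traj J S ω (0+1) = e} ∩ futE J S (Vnext V e) (0+1)) =
          P i ({ω | (traj J S ω 0).1 = i} ∩
            ({ω | traj J S ω (0+1) = e} ∩ futE J S (Vnext V e) (0+1))) := by
        have hcomm : {ω | (traj J S ω 0).1 = i} ∩
            ({ω | traj J S ω (0+1) = e} ∩ futE J S (Vnext V e) (0+1)) =
            ({ω | traj J S ω (0+1) = e} ∩ futE J S (Vnext V e) (0+1)) ∩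
            {ω | (traj J S ω 0).1 = i} := Set.inter_comm _ _
        rw [hcomm]
        exact (measure_inter_conull (null_J0 hJ hP h0 i)).symm
      rw [hins]
      have hΦ0e : DetBy 1 (fun w => (w 0).1 = i ∧ w 1 = e) := by
        intro w w' hww
        show (w 0).1 = i ∧ w 1 = e ↔ (w' 0).1 = i ∧ w' 1 = e
        rw [hww 0 (by omega), hww 1 (le_refl _)]
      have hset : {ω | (traj J S ω 0).1 = i} ∩ {ω | traj J S ω (0+1) = e} =
          {ω | (fun w => (w 0).1 = i ∧ w 1 = e) (traj J S ω)} := rfl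
      calc P i ({ω | (traj J S ω 0).1 = i} ∩ ({ω | traj J S ω (0+1) = e} ∩
              futE J S (Vnext V e) (0+1)))
          = P i ({ω | (fun w => (w 0).1 = i ∧ w 1 = e) (traj J S ω)} ∩
              futE J S (Vnext V e) 1) := by rw [← Set.inter_assoc, hset]
        _ = P i {ω | (fun w => (w 0).1 = i ∧ w 1 = e) (traj J S ω)} *
              P e.1 (futE J S (Vnext V e) 0) := by
            exact ih (detFut_Vnext hV e) i 1 _ hΦ0e e.1 (fun w hw => by rw [hw.2])
        _ = (stepP q i e * P i {ω | (fun w : ℕ → E × ℕ => (w 0).1 = i) (traj J S ω)}) *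
              P e.1 (futE J S (Vnext V e) 0) := by
            rw [← hset, one_step hJ hS hmc i (t := 0)
              (fun w w' hww => by rw [hww 0 (le_refl _)]) (fun w hw => hw) e]
        _ = stepP q i e * P e.1 (futE J S (Vnext V e) 0) := by
            have : {ω | (fun w : ℕ → E × ℕ => (w 0).1 = i) (traj J S ω)} =
                {ω | J 0 ω = i} := rfl
            rw [this, probJ0 hP h0 i, mul_one]
    rw [hL, hR, ← ENNReal.tsum_mul_left]


end Prob

/-! ### counting -/

def cnt (p : ℕ → Prop) : ℕ → ℕ
  | 0 => 0
  | n+1 => cnt p n + (if p n then 1 else 0)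

lemma cnt_zero (p : ℕ → Prop) : cnt p 0 = 0 := rfl

lemma cnt_succ (p : ℕ → Prop) (n : ℕ) : cnt p (n+1) = cnt p n + (if p n then 1 else 0) := rfl

lemma cnt_mono (p : ℕ → Prop) : Monotone (cnt p) := by
  apply monotone_nat_of_le_succ
  intro n
  rw [cnt_succ]
  omega

lemma cnt_le (p : ℕ → Prop) (n : ℕ) : cnt p n ≤ n := by
  induction n with
  | zero => simp [cnt_zero]
  | succ n ih => rw [cnt_succ]; split <;> omega

lemma cnt_lt_of (p : ℕ → Prop) {t N : ℕ} (h : t < N) (hp : p t) : cnt p t < cnt p N := by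
  have h1 : cnt p (t+1) = cnt p t + 1 := by rw [cnt_succ, if_pos hp]
  have h2 : cnt p (t+1) ≤ cnt p N := cnt_mono p h
  omega

lemma cnt_inj (p : ℕ → Prop) {t t' : ℕ} (hp : p t) (hp' : p t')
    (h : cnt p t = cnt p t') : t = t' := by
  rcases lt_trichotomy t t' with h' | h' | h'
  · exact absurd h (Nat.ne_of_lt (cnt_lt_of p h' hp))
  · exact h'
  · exact absurd h.symm (Nat.ne_of_lt (cnt_lt_of p h' hp'))

lemma cnt_congr {p p' : ℕ → Prop} {n : ℕ} (h : ∀ l < n, (p l ↔ p' l)) :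
    cnt p n = cnt p' n := by
  induction n with
  | zero => rfl
  | succ n ih =>
    rw [cnt_succ, cnt_succ, ih (fun l hl => h l (by omega))]
    congr 1
    by_cases hpn : p n
    · rw [if_pos hpn, if_pos ((h n (by omega)).1 hpn)]
    · rw [if_neg hpn, if_neg (fun hc => hpn ((h n (by omega)).2 hc))]

lemma cnt_exists_prev {p : ℕ → Prop} : ∀ {N m : ℕ}, cnt p N = m + 1 →
    ∃ t < N, p t ∧ cnt p t = m := by
  intro N
  induction N with
  | zero => intro m h; rw [cnt_zero] at h; omega
  | succ N ih =>
    intro m h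
    rw [cnt_succ] at h
    by_cases hp : p N
    · rw [if_pos hp] at h
      exact ⟨N, by omega, hp, by omega⟩
    · rw [if_neg hp] at h
      obtain ⟨t, ht, htp, htc⟩ := ih (m := m) (by omega)
      exact ⟨t, by omega, htp, htc⟩

lemma cnt_const {p : ℕ → Prop} {a b : ℕ} (hab : a ≤ b) (h : ∀ l, a ≤ l → l < b → ¬ p l) :
    cnt p b = cnt p a := by
  induction b with
  | zero =>
    have : a = 0 := by omega
    rw [this]
  | succ b ih =>
    rcases Nat.lt_or_ge a (b+1) with h' | h'
    · have hb : a ≤ b := by omega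
      rw [cnt_succ, if_neg (h b hb (by omega)), ih hb (fun l hl hl' => h l hl (by omega))]
      omega
    · have : a = b + 1 := by omega
      rw [this]

lemma cnt_eq_sum (p : ℕ → Prop) (n : ℕ) :
    cnt p n = ∑ t ∈ Finset.range n, (if p t then 1 else 0) := by
  induction n with
  | zero => rfl
  | succ n ih => rw [Finset.sum_range_succ, cnt_succ, ih]


/-! ### visit events -/

def visP (i : E) (m t : ℕ) : (ℕ → E × ℕ) → Prop :=
  fun w => (w t).1 = i ∧ cnt (fun l => (w l).1 = i) t = m

lemma detBy_visP (i : E) (m t : ℕ) : DetBy t (visP i m t) := by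
  intro w w' hww
  unfold visP
  rw [hww t (le_refl t), cnt_congr (fun l hl => by rw [hww l (by omega)])]

def BvisE (J : ℕ → Ω → E) (S : ℕ → Ω → ℕ) (i : E) (m t : ℕ) : Set Ω :=
  {ω | visP i m t (traj J S ω)}

def RecE (J : ℕ → Ω → E) (S : ℕ → Ω → ℕ) (i : E) (m : ℕ) : Set Ω :=
  ⋃ t, BvisE J S i m t

lemma Bvis_disj {J : ℕ → Ω → E} {S : ℕ → Ω → ℕ} {i : E} {m : ℕ} :
    Pairwise (Function.onFun Disjoint (fun t => BvisE J S i m t)) := by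
  intro t t' hne
  show Disjoint (BvisE J S i m t) (BvisE J S i m t')
  rw [Set.disjoint_left]
  rintro ω ⟨h1, h2⟩ ⟨h1', h2'⟩
  exact hne (cnt_inj _ h1 h1' (h2.trans h2'.symm))

def VretP (i : E) (s : ℕ) : (ℕ → E × ℕ) → Prop :=
  fun w => ∃ n, 1 ≤ n ∧ n ≤ s ∧ (w n).1 = i

lemma detFut_VretP (i : E) (s : ℕ) : DetFut s (VretP i s) := by
  intro w w' hww
  unfold VretP
  constructor
  · rintro ⟨n, h1, h2, h3⟩; exact ⟨n, h1, h2, by rw [← hww n h1 h2]; exact h3⟩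
  · rintro ⟨n, h1, h2, h3⟩; exact ⟨n, h1, h2, by rw [hww n h1 h2]; exact h3⟩

lemma Rec_succ_decomp {J : ℕ → Ω → E} {S : ℕ → Ω → ℕ} {i : E} {m : ℕ} :
    RecE J S i (m+1) = ⋃ t, (BvisE J S i m t ∩ ⋃ s, futE J S (VretP i s) t) := by
  ext ω
  simp only [RecE, BvisE, Set.mem_iUnion, Set.mem_inter_iff, Set.mem_setOf_eq, futE,
    VretP, visP]
  constructor
  · rintro ⟨t', hp', hc'⟩
    obtain ⟨t, htt', htp, htc⟩ := cnt_exists_prev hc'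
    exact ⟨t, ⟨htp, htc⟩, t', t' - t, by omega, by omega,
      by rw [(by omega : t + (t' - t) = t')]; exact hp'⟩
  · rintro ⟨t, ⟨htp, htc⟩, s, n, h1, h2, h3⟩
    have hex : ∃ n, 1 ≤ n ∧ (traj J S ω (t + n)).1 = i := ⟨n, h1, h3⟩
    classical
    let n₀ := Nat.find hex
    obtain ⟨hn₀1, hn₀p⟩ := Nat.find_spec hex
    refine ⟨t + n₀, hn₀p, ?_⟩
    have hstep : cnt (fun l => (traj J S ω l).1 = i) (t+1) = m + 1 := by
      rw [cnt_succ, if_pos htp, htc]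
    have hconst : cnt (fun l => (traj J S ω l).1 = i) (t + n₀) =
        cnt (fun l => (traj J S ω l).1 = i) (t+1) := by
      refine cnt_const (by omega) ?_
      intro l hl1 hl2 hlp
      have hlt : l - t < n₀ := by omega
      exact Nat.find_min hex hlt ⟨by omega, by rw [(by omega : t + (l - t) = l)]; exact hlp⟩
    rw [hconst, hstep]

/-! ### no-visit variants for irreducibility -/

def visNoP (i₀ i : E) (m t : ℕ) : (ℕ → E × ℕ) → Prop :=
  fun w => visP i₀ m t w ∧ ∀ l ≤ t, (w l).1 ≠ i

lemma detBy_visNoP (i₀ i : E) (m t : ℕ) : DetBy t (visNoP i₀ i m t) := by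
  intro w w' hww
  unfold visNoP
  rw [detBy_visP i₀ m t w w' hww]
  constructor
  · rintro ⟨h1, h2⟩; exact ⟨h1, fun l hl => by rw [← hww l hl]; exact h2 l hl⟩
  · rintro ⟨h1, h2⟩; exact ⟨h1, fun l hl => by rw [hww l hl]; exact h2 l hl⟩

def VGP (i₀ i : E) (s : ℕ) : (ℕ → E × ℕ) → Prop :=
  fun w => ∃ n, 1 ≤ n ∧ n ≤ s ∧ (w n).1 = i₀ ∧ ∀ l, 1 ≤ l → l ≤ n → (w l).1 ≠ i

lemma detFut_VGP (i₀ i : E) (s : ℕ) : DetFut s (VGP i₀ i s) := by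
  intro w w' hww
  unfold VGP
  constructor
  · rintro ⟨n, h1, h2, h3, h4⟩
    exact ⟨n, h1, h2, by rw [← hww n h1 h2]; exact h3,
      fun l hl1 hl2 => by rw [← hww l hl1 (by omega)]; exact h4 l hl1 hl2⟩
  · rintro ⟨n, h1, h2, h3, h4⟩
    exact ⟨n, h1, h2, by rw [hww n h1 h2]; exact h3,
      fun l hl1 hl2 => by rw [hww l hl1 (by omega)]; exact h4 l hl1 hl2⟩

def EmE (J : ℕ → Ω → E) (S : ℕ → Ω → ℕ) (i₀ i : E) (m : ℕ) : Set Ω :=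
  ⋃ t, {ω | visNoP i₀ i m t (traj J S ω)}

lemma Em_succ_decomp {J : ℕ → Ω → E} {S : ℕ → Ω → ℕ} {i₀ i : E} {m : ℕ} :
    EmE J S i₀ i (m+1) = ⋃ t,
      ({ω | visNoP i₀ i m t (traj J S ω)} ∩ ⋃ s, futE J S (VGP i₀ i s) t) := by
  ext ω
  simp only [EmE, Set.mem_iUnion, Set.mem_inter_iff, Set.mem_setOf_eq, futE,
    VGP, visNoP, visP]
  constructor
  · rintro ⟨t', ⟨hp', hc'⟩, hno'⟩
    obtain ⟨t, htt', htp, htc⟩ := cnt_exists_prev hc'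
    refine ⟨t, ⟨⟨htp, htc⟩, fun l hl => hno' l (by omega)⟩, t', t' - t, by omega, by omega,
      by rw [(by omega : t + (t' - t) = t')]; exact hp', ?_⟩
    intro l hl1 hl2
    exact hno' (t + l) (by omega)
  · rintro ⟨t, ⟨⟨htp, htc⟩, hno⟩, s, n, h1, h2, h3, h4⟩
    have hex : ∃ n, 1 ≤ n ∧ (traj J S ω (t + n)).1 = i₀ ∧
        ∀ l, 1 ≤ l → l ≤ n → (traj J S ω (t + l)).1 ≠ i := ⟨n, h1, h3, h4⟩
    classical
    let n₀ := Nat.find hex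
    obtain ⟨hn₀1, hn₀p, hn₀no⟩ := Nat.find_spec hex
    refine ⟨t + n₀, ⟨hn₀p, ?_⟩, ?_⟩
    · have hstep : cnt (fun l => (traj J S ω l).1 = i₀) (t+1) = m + 1 := by
        rw [cnt_succ, if_pos htp, htc]
      have hconst : cnt (fun l => (traj J S ω l).1 = i₀) (t + n₀) =
          cnt (fun l => (traj J S ω l).1 = i₀) (t+1) := by
        refine cnt_const (by omega) ?_
        intro l hl1 hl2 hlp
        have hlt : l - t < n₀ := by omega
        exact Nat.find_min hex hlt ⟨by omega,
          by rw [(by omega : t + (l - t) = l)]; exact hlp,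
          fun l' hl'1 hl'2 => hn₀no l' hl'1 (by omega)⟩
      rw [hconst, hstep]
    · intro l hl
      rcases Nat.lt_or_ge l (t+1) with h' | h'
      · exact hno l (by omega)
      · have := hn₀no (l - t) (by omega) (by omega)
        rwa [(by omega : t + (l - t) = l)] at this


section RecProb

variable {J : ℕ → Ω → E} {S : ℕ → Ω → ℕ} {q : E → E → ℕ → ℝ} {P : E → Measure Ω}
variable (hJ : ∀ n i, MeasurableSet {ω | J n ω = i})
variable (hS : ∀ n k, MeasurableSet {ω | S n ω = k})
variable (hmc : ∀ (i₀ : E) (n : ℕ) (js : ℕ → E) (xs : ℕ → ℕ),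
    P i₀ ({ω | J (n+1) ω = js (n+1) ∧ Xproc S (n+1) ω = xs (n+1)} ∩
        {ω | ∀ l ≤ n, J l ω = js l ∧ Xproc S l ω = xs l}) =
      ENNReal.ofReal (q (js n) (js (n+1)) (xs (n+1))) *
        P i₀ {ω | ∀ l ≤ n, J l ω = js l ∧ Xproc S l ω = xs l})
variable (hP : ∀ i, IsProbabilityMeasure (P i))
variable (h0 : ∀ i₀ : E, P i₀ {ω | J 0 ω = i₀ ∧ S 0 ω = 0} = 1)

include hJ hS hmc hP h0 in
lemma master_iUnion (x : E) {t : ℕ} {Φ : (ℕ → E × ℕ) → Prop} (hΦ : DetBy t Φ) {i : E}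
    (hΦi : ∀ w, Φ w → (w t).1 = i)
    {V : ℕ → (ℕ → E × ℕ) → Prop} (hV : ∀ s, DetFut s (V s))
    (hmono : ∀ s w, V s w → V (s+1) w) :
    P x ({ω | Φ (traj J S ω)} ∩ ⋃ s, futE J S (V s) t) =
      P x {ω | Φ (traj J S ω)} * P i (⋃ s, futE J S (V s) 0) := by
  have hmono' : ∀ r : ℕ, Monotone (fun s => futE J S (V s) r) := by
    intro r
    apply monotone_nat_of_le_succ
    intro s ω hω
    exact hmono s _ hω
  rw [Set.inter_iUnion,
    Directed.measure_iUnion (Monotone.directed_le (fun s s' hss' =>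
      Set.inter_subset_inter_right _ (hmono' t hss'))),
    Directed.measure_iUnion (Monotone.directed_le (hmono' 0))]
  calc ⨆ s, P x ({ω | Φ (traj J S ω)} ∩ futE J S (V s) t)
      = ⨆ s, P x {ω | Φ (traj J S ω)} * P i (futE J S (V s) 0) :=
        iSup_congr fun s => master hJ hS hmc hP h0 s (hV s) x t Φ hΦ i hΦi
    _ = P x {ω | Φ (traj J S ω)} * ⨆ s, P i (futE J S (V s) 0) := (ENNReal.mul_iSup _ _).symm

def retEv (J : ℕ → Ω → E) (i : E) : Set Ω := {ω | ∃ n, 1 ≤ n ∧ J n ω = i}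

omit [Fintype E] [DecidableEq E] in
lemma retEv_eq_iUnion (i : E) : retEv J i = ⋃ s, futE J S (VretP i s) 0 := by
  ext ω
  simp only [retEv, futE, VretP, Set.mem_iUnion, Set.mem_setOf_eq, Nat.zero_add]
  constructor
  · rintro ⟨n, h1, h2⟩; exact ⟨n, n, h1, le_refl n, h2⟩
  · rintro ⟨s, n, h1, h2, h3⟩; exact ⟨n, h1, h3⟩

include hJ in
lemma meas_retEv (i : E) : MeasurableSet (retEv J i) := by
  have : retEv J i = ⋃ n, ⋃ (_ : 1 ≤ n), {ω | J n ω = i} := by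
    ext ω; simp [retEv]
  rw [this]
  exact MeasurableSet.iUnion fun n => MeasurableSet.iUnion fun _ => hJ n i

include hJ hS hmc hP h0 in
lemma prob_Rec_succ (x i : E) (m : ℕ) :
    P x (RecE J S i (m+1)) = P x (RecE J S i m) * P i (retEv J i) := by
  rw [Rec_succ_decomp, measure_iUnion
    (fun t t' hne => Disjoint.mono Set.inter_subset_left Set.inter_subset_left
      (Bvis_disj hne))
    (fun t => (meas_det hJ hS (detBy_visP i m t)).inter
      (MeasurableSet.iUnion fun s => meas_futE hJ hS (detFut_VretP i s) t))]
  have hterm : ∀ t, P x (BvisE J S i m t ∩ ⋃ s, futE J S (VretP i s) t) =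
      P x (BvisE J S i m t) * P i (retEv J i) := by
    intro t
    rw [retEv_eq_iUnion (S := S)]
    exact master_iUnion hJ hS hmc hP h0 x (detBy_visP i m t) (fun w hw => hw.1)
      (detFut_VretP i) (fun s w => by
        rintro ⟨n, h1, h2, h3⟩; exact ⟨n, h1, by omega, h3⟩)
  rw [tsum_congr hterm, ENNReal.tsum_mul_right]
  congr 1
  exact (measure_iUnion Bvis_disj (fun t => meas_det hJ hS (detBy_visP i m t))).symm

variable (hrec : ∀ i : E, ∀ᵐ ω ∂(P i), ∃ n, 1 ≤ n ∧ J n ω = i)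

include hJ hP hrec in
lemma prob_retEv (i : E) : P i (retEv J i) = 1 := by
  have := hP i
  rw [← prob_compl_eq_zero_iff (meas_retEv hJ i)]
  have h := hrec i
  rw [ae_iff] at h
  exact h

include hJ hS hmc hP h0 hrec in
lemma prob_Rec_eq (x i : E) (m : ℕ) : P x (RecE J S i m) = P x (RecE J S i 0) := by
  induction m with
  | zero => rfl
  | succ m ih =>
    rw [prob_Rec_succ hJ hS hmc hP h0 x i m, prob_retEv hJ hP hrec i, mul_one, ih]


include hJ hS hmc hP h0 in
lemma prob_Em_succ (i₀ i : E) (m : ℕ) :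
    P i₀ (EmE J S i₀ i (m+1)) =
      P i₀ (EmE J S i₀ i m) * P i₀ (⋃ s, futE J S (VGP i₀ i s) 0) := by
  have hsub : ∀ m t, {ω | visNoP i₀ i m t (traj J S ω)} ⊆ BvisE J S i₀ m t :=
    fun m t ω hω => hω.1
  rw [Em_succ_decomp, measure_iUnion
    (fun t t' hne => Disjoint.mono (Set.inter_subset_left.trans (hsub m t))
      (Set.inter_subset_left.trans (hsub m t')) (Bvis_disj hne))
    (fun t => (meas_det hJ hS (detBy_visNoP i₀ i m t)).inter
      (MeasurableSet.iUnion fun s => meas_futE hJ hS (detFut_VGP i₀ i s) t))]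
  have hterm : ∀ t, P i₀ ({ω | visNoP i₀ i m t (traj J S ω)} ∩
      ⋃ s, futE J S (VGP i₀ i s) t) =
      P i₀ {ω | visNoP i₀ i m t (traj J S ω)} * P i₀ (⋃ s, futE J S (VGP i₀ i s) 0) := by
    intro t
    exact master_iUnion hJ hS hmc hP h0 i₀ (detBy_visNoP i₀ i m t) (fun w hw => hw.1.1)
      (detFut_VGP i₀ i) (fun s w => by
        rintro ⟨n, h1, h2, h3, h4⟩; exact ⟨n, h1, by omega, h3, h4⟩)
  rw [tsum_congr hterm, ENNReal.tsum_mul_right]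
  congr 1
  refine (measure_iUnion ?_ (fun t => meas_det hJ hS (detBy_visNoP i₀ i m t))).symm
  exact fun t t' hne => Disjoint.mono (hsub m t) (hsub m t') (Bvis_disj hne)

variable (hirr : ∀ i j : E, 0 < P i {ω | ∃ n, 1 ≤ n ∧ J n ω = j})

include hJ hS hmc hP h0 hrec hirr in
lemma prob_Rec0 (i₀ : E) (i : E) : P i₀ (RecE J S i 0) = 1 := by
  have hprob := hP i₀
  have hRecTop : ∀ x : E, P x (RecE J S x 0) = 1 := by
    intro x
    have hx := hP x
    refine le_antisymm prob_le_one ?_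
    calc (1 : ℝ≥0∞) = P x {ω | J 0 ω = x} := (probJ0 hP h0 x).symm
      _ ≤ P x (RecE J S x 0) := by
        refine measure_mono fun ω hω => ?_
        exact Set.mem_iUnion.2 ⟨0, hω, rfl⟩
  by_cases hii : i = i₀
  · rw [hii]; exact hRecTop i₀
  -- i ≠ i₀
  set D := {ω | ∀ l : ℕ, J l ω ≠ i} with hD_def
  have hDmeas : MeasurableSet D := by
    have : D = ⋂ l, {ω | J l ω = i}ᶜ := by ext ω; simp [hD_def]
    rw [this]
    exact MeasurableSet.iInter fun l => (hJ l i).compl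
  have hEmMeas : ∀ m, MeasurableSet (EmE J S i₀ i m) :=
    fun m => MeasurableSet.iUnion fun t => meas_det hJ hS (detBy_visNoP i₀ i m t)
  set rG := P i₀ (⋃ s, futE J S (VGP i₀ i s) 0) with hrG_def
  have hE0 : P i₀ (EmE J S i₀ i 0) = 1 := by
    refine le_antisymm prob_le_one ?_
    calc (1 : ℝ≥0∞) = P i₀ {ω | J 0 ω = i₀} := (probJ0 hP h0 i₀).symm
      _ ≤ P i₀ (EmE J S i₀ i 0) := by
        refine measure_mono fun ω hω => ?_
        refine Set.mem_iUnion.2 ⟨0, ⟨hω, rfl⟩, ?_⟩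
        intro l hl
        have : l = 0 := by omega
        rw [this]
        show J 0 ω ≠ i
        rw [hω]
        exact fun hc => hii hc.symm
  have hEm : ∀ m, P i₀ (EmE J S i₀ i m) = rG ^ m := by
    intro m
    induction m with
    | zero => simpa using hE0
    | succ m ih =>
      rw [prob_Em_succ hJ hS hmc hP h0 i₀ i m, ih, ← hrG_def, pow_succ]
  have hRec1 : ∀ m, P i₀ (RecE J S i₀ m) = 1 := fun m => by
    rw [prob_Rec_eq hJ hS hmc hP h0 hrec i₀ i₀ m]; exact hRecTop i₀
  have hDsub : ∀ m, D ⊆ EmE J S i₀ i m ∪ (RecE J S i₀ m)ᶜ := by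
    intro m ω hω
    by_cases hrec' : ω ∈ RecE J S i₀ m
    · obtain ⟨t, ht⟩ := Set.mem_iUnion.1 hrec'
      exact Or.inl (Set.mem_iUnion.2 ⟨t, ht, fun l _ => hω l⟩)
    · exact Or.inr hrec'
  have hD : ∀ m, P i₀ D ≤ rG ^ m := by
    intro m
    calc P i₀ D ≤ P i₀ (EmE J S i₀ i m ∪ (RecE J S i₀ m)ᶜ) := measure_mono (hDsub m)
      _ ≤ P i₀ (EmE J S i₀ i m) + P i₀ (RecE J S i₀ m)ᶜ := measure_union_le _ _
      _ = rG ^ m + 0 := by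
        rw [hEm m]
        congr 1
        have hmR : MeasurableSet (RecE J S i₀ m) :=
          MeasurableSet.iUnion fun t => meas_det hJ hS (detBy_visP i₀ m t)
        exact (prob_compl_eq_zero_iff hmR).2 (hRec1 m)
      _ = rG ^ m := add_zero _
  by_cases hr : rG = 1
  · exfalso
    have h1 : ∀ m, P i₀ (EmE J S i₀ i m)ᶜ = 0 := fun m => by
      rw [prob_compl_eq_zero_iff (hEmMeas m), hEm m, hr, one_pow]
    have hint : P i₀ (⋂ m, EmE J S i₀ i m)ᶜ = 0 := by
      rw [Set.compl_iInter]
      exact measure_iUnion_null h1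
    have hsub2 : (⋂ m, EmE J S i₀ i m) ⊆ {ω | ∃ n, 1 ≤ n ∧ J n ω = i}ᶜ := by
      intro ω hω
      rintro ⟨n, hn1, hni⟩
      obtain ⟨t, ⟨⟨hp, hc⟩, hno⟩⟩ := Set.mem_iUnion.1 (Set.mem_iInter.1 hω n)
      have htn : n ≤ t := le_trans (le_of_eq hc.symm) (cnt_le _ t)
      exact hno n htn hni
    have : P i₀ {ω | ∃ n, 1 ≤ n ∧ J n ω = i} = 0 :=
      le_antisymm (le_trans (measure_mono (Set.subset_compl_comm.1 hsub2))
        (le_of_eq hint)) (zero_le)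
    exact absurd this (ne_of_gt (hirr i₀ i))
  · have hrlt : rG < 1 := lt_of_le_of_ne prob_le_one hr
    have hpow : Tendsto (fun m : ℕ => rG ^ m) atTop (𝓝 0) :=
      ENNReal.tendsto_pow_atTop_nhds_zero_of_lt_one hrlt
    have hD0 : P i₀ D = 0 :=
      le_antisymm (le_of_tendsto_of_tendsto' tendsto_const_nhds hpow hD) (zero_le)
    have hDc : RecE J S i 0 = Dᶜ := by
      ext ω
      simp only [RecE, BvisE, Set.mem_iUnion, Set.mem_setOf_eq, Set.mem_compl_iff,
        hD_def, visP, not_forall, not_not]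
      constructor
      · rintro ⟨t, hp, _⟩; exact ⟨t, hp⟩
      · rintro ⟨l, hl⟩
        have hex : ∃ l, J l ω = i := ⟨l, hl⟩
        classical
        refine ⟨Nat.find hex, Nat.find_spec hex, ?_⟩
        rw [show (fun l' => (traj J S ω l').1 = i) = (fun l' => J l' ω = i) from rfl]
        rw [cnt_const (Nat.zero_le _) (fun l' _ hl' => Nat.find_min hex hl'), cnt_zero]
    rw [hDc, prob_compl_eq_one_iff hDmeas]
    exact hD0

include hJ hS hmc hP h0 hrec hirr in
lemma prob_Rec (i₀ : E) (i : E) (m : ℕ) : P i₀ (RecE J S i m) = 1 := by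
  rw [prob_Rec_eq hJ hS hmc hP h0 hrec i₀ i m]
  exact prob_Rec0 hJ hS hmc hP h0 hrec hirr i₀ i


/-! ### the regeneration events -/

def AmE (J : ℕ → Ω → E) (S : ℕ → Ω → ℕ) (i j : E) (k : ℕ) (m : ℕ) : Set Ω :=
  ⋃ t, (BvisE J S i m t ∩ {ω | traj J S ω (t+1) = (j, k)})

include hJ hS in
lemma meas_AmE (i j : E) (k : ℕ) (m : ℕ) : MeasurableSet (AmE J S i j k m) :=
  MeasurableSet.iUnion fun t => (meas_det hJ hS (detBy_visP i m t)).inter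
    (meas_trajEq hJ hS (t+1) (j,k))

lemma AmE_disj_t {i j : E} {k m : ℕ} : Pairwise (Function.onFun Disjoint
    (fun t => BvisE J S i m t ∩ {ω | traj J S ω (t+1) = (j, k)})) :=
  fun t t' hne => Disjoint.mono Set.inter_subset_left Set.inter_subset_left (Bvis_disj hne)

include hJ hS hmc hP h0 hrec hirr in
lemma prob_AmE (i₀ i j : E) (k : ℕ) (m : ℕ) :
    P i₀ (AmE J S i j k m) = ENNReal.ofReal (q i j k) := by
  rw [AmE, measure_iUnion AmE_disj_t (fun t => (meas_det hJ hS (detBy_visP i m t)).inter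
    (meas_trajEq hJ hS (t+1) (j,k)))]
  have hterm : ∀ t, P i₀ (BvisE J S i m t ∩ {ω | traj J S ω (t+1) = (j, k)}) =
      ENNReal.ofReal (q i j k) * P i₀ (BvisE J S i m t) :=
    fun t => one_step hJ hS hmc i₀ (detBy_visP i m t) (fun w hw => hw.1) (j, k)
  rw [tsum_congr hterm, ENNReal.tsum_mul_left]
  rw [← measure_iUnion Bvis_disj (fun t => meas_det hJ hS (detBy_visP i m t))]
  rw [show (⋃ t, BvisE J S i m t) = RecE J S i m from rfl,
    prob_Rec hJ hS hmc hP h0 hrec hirr i₀ i m, mul_one]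

/-- the joint pattern: m-th regeneration outcome `(j,k)` and (m'-th visit at `t'`) -/
def pairP (i j : E) (k : ℕ) (m m' t' : ℕ) : (ℕ → E × ℕ) → Prop := fun w =>
  (∃ t, t < t' ∧ visP i m t w ∧ w (t+1) = (j, k)) ∧ visP i m' t' w

lemma detBy_pairP (i j : E) (k : ℕ) (m m' t' : ℕ) : DetBy t' (pairP i j k m m' t') := by
  intro w w' hww
  unfold pairP
  rw [detBy_visP i m' t' w w' hww]
  constructor
  · rintro ⟨⟨t, ht, hv, hs⟩, hv'⟩
    exact ⟨⟨t, ht, (detBy_visP i m t w w' (fun l hl => hww l (by omega))).1 hv,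
      by rw [← hww (t+1) (by omega)]; exact hs⟩, hv'⟩
  · rintro ⟨⟨t, ht, hv, hs⟩, hv'⟩
    exact ⟨⟨t, ht, (detBy_visP i m t w w' (fun l hl => hww l (by omega))).2 hv,
      by rw [hww (t+1) (by omega)]; exact hs⟩, hv'⟩

lemma pairP_lt {i j : E} {k m m' : ℕ} (hmm : m < m') {w : ℕ → E × ℕ}
    (hm : ∃ t, visP i m t w ∧ w (t+1) = (j,k)) (t' : ℕ) (hv' : visP i m' t' w) :
    pairP i j k m m' t' w := by
  obtain ⟨t, hv, hs⟩ := hm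
  refine ⟨⟨t, ?_, hv, hs⟩, hv'⟩
  by_contra hle
  have h2 : cnt (fun l => (w l).1 = i) t' ≤ cnt (fun l => (w l).1 = i) t :=
    cnt_mono _ (by omega)
  rw [hv.2, hv'.2] at h2
  omega

lemma AmE_inter_Rec {i j : E} {k m m' : ℕ} (hmm : m < m') :
    AmE J S i j k m ∩ RecE J S i m' = ⋃ t', {ω | pairP i j k m m' t' (traj J S ω)} := by
  ext ω
  simp only [AmE, RecE, BvisE, Set.mem_inter_iff, Set.mem_iUnion, Set.mem_setOf_eq]
  constructor
  · rintro ⟨⟨t, hv, hs⟩, ⟨t', hv'⟩⟩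
    exact ⟨t', pairP_lt hmm ⟨t, hv, hs⟩ t' hv'⟩
  · rintro ⟨t', ⟨⟨t, ht, hv, hs⟩, hv'⟩⟩
    exact ⟨⟨t, hv, hs⟩, ⟨t', hv'⟩⟩

lemma AmE_inter_AmE {i j : E} {k m m' : ℕ} (hmm : m < m') :
    AmE J S i j k m ∩ AmE J S i j k m' =
      ⋃ t', ({ω | pairP i j k m m' t' (traj J S ω)} ∩ {ω | traj J S ω (t'+1) = (j,k)}) := by
  ext ω
  simp only [AmE, BvisE, Set.mem_inter_iff, Set.mem_iUnion, Set.mem_setOf_eq]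
  constructor
  · rintro ⟨⟨t, hv, hs⟩, ⟨t', hv', hs'⟩⟩
    exact ⟨t', pairP_lt hmm ⟨t, hv, hs⟩ t' hv', hs'⟩
  · rintro ⟨t', ⟨⟨t, ht, hv, hs⟩, hv'⟩, hs'⟩
    exact ⟨⟨t, hv, hs⟩, ⟨t', hv', hs'⟩⟩

include hJ hS hmc hP h0 hrec hirr in
lemma prob_AmE_inter (i₀ i j : E) (k : ℕ) {m m' : ℕ} (hmm : m < m') :
    P i₀ (AmE J S i j k m ∩ AmE J S i j k m') =
      ENNReal.ofReal (q i j k) * ENNReal.ofReal (q i j k) := by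
  have hdisj : Pairwise (Function.onFun Disjoint
      (fun t' => {ω | pairP i j k m m' t' (traj J S ω)} ∩
        {ω | traj J S ω (t'+1) = (j,k)})) := by
    intro t t' hne
    have hb := Bvis_disj (J := J) (S := S) (i := i) (m := m') hne
    refine Disjoint.mono (Set.inter_subset_left.trans ?_) (Set.inter_subset_left.trans ?_)
      hb <;> exact fun ω hω => hω.2
  rw [AmE_inter_AmE hmm, measure_iUnion hdisj
    (fun t' => (meas_det hJ hS (detBy_pairP i j k m m' t')).inter
      (meas_trajEq hJ hS (t'+1) (j,k)))]
  have hterm : ∀ t', P i₀ ({ω | pairP i j k m m' t' (traj J S ω)} ∩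
      {ω | traj J S ω (t'+1) = (j,k)}) =
      ENNReal.ofReal (q i j k) * P i₀ {ω | pairP i j k m m' t' (traj J S ω)} :=
    fun t' => one_step hJ hS hmc i₀ (detBy_pairP i j k m m' t')
      (fun w hw => hw.2.1) (j, k)
  rw [tsum_congr hterm, ENNReal.tsum_mul_left]
  congr 1
  have hdisj2 : Pairwise (Function.onFun Disjoint
      (fun t' => {ω | pairP i j k m m' t' (traj J S ω)})) := by
    intro t t' hne
    have hb := Bvis_disj (J := J) (S := S) (i := i) (m := m') hne
    exact Disjoint.mono (fun ω hω => hω.2) (fun ω hω => hω.2) hb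
  rw [← measure_iUnion hdisj2 (fun t' => meas_det hJ hS (detBy_pairP i j k m m' t')),
    ← AmE_inter_Rec hmm]
  have hcon : P i₀ (AmE J S i j k m ∩ RecE J S i m') = P i₀ (AmE J S i j k m) := by
    refine measure_inter_conull ?_
    have hmR : MeasurableSet (RecE J S i m') :=
      MeasurableSet.iUnion fun t => meas_det hJ hS (detBy_visP i m' t)
    exact (prob_compl_eq_zero_iff hmR).2 (prob_Rec hJ hS hmc hP h0 hrec hirr i₀ i m')
  rw [hcon, prob_AmE hJ hS hmc hP h0 hrec hirr i₀ i j k m]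

end RecProb

section Indicator

variable {μ : Measure Ω} [IsProbabilityMeasure μ]

lemma indepFun_indicator_pair {A B : Set Ω} (hA : MeasurableSet A) (hB : MeasurableSet B)
    (h : μ (A ∩ B) = μ A * μ B) :
    IndepFun (A.indicator fun _ => (1:ℝ)) (B.indicator fun _ => (1:ℝ)) μ := by
  have hmeas : ∀ i : Fin 2, MeasurableSet (![A, B] i) := by
    intro i; fin_cases i <;> assumption
  have hii : iIndepSet (![A, B]) μ := by
    rw [iIndepSet_iff_meas_biInter hmeas]
    intro s
    by_cases h0 : (0 : Fin 2) ∈ s <;> by_cases h1 : (1 : Fin 2) ∈ s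
    · have hs : s = {0, 1} := by
        ext x; fin_cases x <;> simp [h0, h1]
      rw [hs]
      have hset : (⋂ i ∈ ({0,1} : Finset (Fin 2)), ![A,B] i) = A ∩ B := by
        ext ω
        simp [Fin.forall_fin_two]
      rw [hset, h, show ({0,1} : Finset (Fin 2)) = Finset.univ from by decide,
        Fin.prod_univ_two]
      simp
    · have hs : s = {0} := by
        ext x; fin_cases x <;> simp [h0, h1]
      rw [hs, Finset.set_biInter_singleton, Finset.prod_singleton]
    · have hs : s = {1} := by
        ext x; fin_cases x <;> simp [h0, h1]
      rw [hs, Finset.set_biInter_singleton, Finset.prod_singleton]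
    · have hs : s = ∅ := by
        ext x; fin_cases x <;> simp [h0, h1]
      rw [hs]
      simp
  have h2 := (hii.iIndepFun_indicator (m := (inferInstance : MeasurableSpace ℝ))
    (β := ℝ)).indepFun (i := 0) (j := 1) (by decide)
  simpa using h2

lemma identDistrib_indicator_pair {A B : Set Ω} (hA : MeasurableSet A) (hB : MeasurableSet B)
    (h : μ A = μ B) :
    IdentDistrib (A.indicator fun _ => (1:ℝ)) (B.indicator fun _ => (1:ℝ)) μ μ := by
  refine ⟨(measurable_const.indicator hA).aemeasurable,
    (measurable_const.indicator hB).aemeasurable, ?_⟩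
  refine Measure.ext fun s hs => ?_
  rw [Measure.map_apply (measurable_const.indicator hA) hs,
    Measure.map_apply (measurable_const.indicator hB) hs,
    Set.indicator_const_preimage_eq_union, Set.indicator_const_preimage_eq_union]
  by_cases h1 : (1:ℝ) ∈ s <;> by_cases h02 : (0:ℝ) ∈ s
  · rw [if_pos h1, if_pos h02, if_pos h1, if_pos h02, Set.union_compl_self,
      Set.union_compl_self]
  · rw [if_pos h1, if_neg h02, if_pos h1, if_neg h02, Set.union_empty, Set.union_empty]
    exact h
  · rw [if_neg h1, if_pos h02, if_neg h1, if_pos h02, Set.empty_union, Set.empty_union,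
      measure_compl hA (measure_ne_top μ A), measure_compl hB (measure_ne_top μ B), h]
  · rw [if_neg h1, if_neg h02, if_neg h1, if_neg h02]

lemma integral_indicator_one {A : Set Ω} (hA : MeasurableSet A) :
    ∫ ω, A.indicator (fun _ => (1:ℝ)) ω ∂μ = (μ A).toReal := by
  rw [MeasureTheory.integral_indicator_const (1:ℝ) hA]
  simp
  rfl

end Indicator

section SLLN

variable {J : ℕ → Ω → E} {S : ℕ → Ω → ℕ} {q : E → E → ℕ → ℝ} {P : E → Measure Ω}
variable (hJ : ∀ n i, MeasurableSet {ω | J n ω = i})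
variable (hS : ∀ n k, MeasurableSet {ω | S n ω = k})
variable (hmc : ∀ (i₀ : E) (n : ℕ) (js : ℕ → E) (xs : ℕ → ℕ),
    P i₀ ({ω | J (n+1) ω = js (n+1) ∧ Xproc S (n+1) ω = xs (n+1)} ∩
        {ω | ∀ l ≤ n, J l ω = js l ∧ Xproc S l ω = xs l}) =
      ENNReal.ofReal (q (js n) (js (n+1)) (xs (n+1))) *
        P i₀ {ω | ∀ l ≤ n, J l ω = js l ∧ Xproc S l ω = xs l})
variable (hP : ∀ i, IsProbabilityMeasure (P i))
variable (h0 : ∀ i₀ : E, P i₀ {ω | J 0 ω = i₀ ∧ S 0 ω = 0} = 1)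
variable (hrec : ∀ i : E, ∀ᵐ ω ∂(P i), ∃ n, 1 ≤ n ∧ J n ω = i)
variable (hirr : ∀ i j : E, 0 < P i {ω | ∃ n, 1 ≤ n ∧ J n ω = j})

include hJ hS hmc hP h0 hrec hirr in
lemma slln_Am (i₀ i j : E) (k : ℕ) (hq1 : 0 ≤ q i j k) :
    ∀ᵐ ω ∂(P i₀), Tendsto (fun n : ℕ => (n:ℝ)⁻¹ *
      ∑ m ∈ Finset.range n, (AmE J S i j k m).indicator (fun _ => (1:ℝ)) ω)
      atTop (𝓝 (q i j k)) := by
  have hprob := hP i₀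
  set ξ : ℕ → Ω → ℝ := fun m => (AmE J S i j k m).indicator (fun _ => (1:ℝ)) with hξ
  have hint : Integrable (ξ 0) (P i₀) :=
    (integrable_const (1:ℝ)).indicator (meas_AmE hJ hS i j k 0)
  have hindep : Pairwise (Function.onFun (IndepFun · · (P i₀)) ξ) := by
    intro m m' hne
    have key : ∀ a b : ℕ, a < b → IndepFun (ξ a) (ξ b) (P i₀) := by
      intro a b hab
      refine indepFun_indicator_pair (meas_AmE hJ hS i j k a) (meas_AmE hJ hS i j k b) ?_
      rw [prob_AmE_inter hJ hS hmc hP h0 hrec hirr i₀ i j k hab,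
        prob_AmE hJ hS hmc hP h0 hrec hirr i₀ i j k a,
        prob_AmE hJ hS hmc hP h0 hrec hirr i₀ i j k b]
    rcases lt_or_gt_of_ne hne with h | h
    · exact key m m' h
    · exact (key m' m h).symm
  have hident : ∀ m, IdentDistrib (ξ m) (ξ 0) (P i₀) (P i₀) := by
    intro m
    refine identDistrib_indicator_pair (meas_AmE hJ hS i j k m) (meas_AmE hJ hS i j k 0) ?_
    rw [prob_AmE hJ hS hmc hP h0 hrec hirr i₀ i j k m,
      prob_AmE hJ hS hmc hP h0 hrec hirr i₀ i j k 0]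
  have hmean : (P i₀)[ξ 0] = q i j k := by
    rw [hξ]
    rw [integral_indicator_one (meas_AmE hJ hS i j k 0),
      prob_AmE hJ hS hmc hP h0 hrec hirr i₀ i j k 0, ENNReal.toReal_ofReal hq1]
  have hs := strong_law_ae ξ hint hindep hident
  rw [hmean] at hs
  filter_upwards [hs] with ω hω
  simpa [smul_eq_mul] using hω

include hJ hS hmc hP in
lemma prob_X_succ_zero (hq0 : ∀ i j, q i j 0 = 0) (i₀ : E) (t : ℕ) :
    P i₀ {ω | Xproc S (t+1) ω = 0} = 0 := by
  have hsub : {ω | Xproc S (t+1) ω = 0} ⊆ ⋃ p : E × E,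
      ({ω | (fun w : ℕ → E × ℕ => (w t).1 = p.1) (traj J S ω)} ∩
        {ω | traj J S ω (t+1) = (p.2, 0)}) := by
    intro ω hω
    refine Set.mem_iUnion.2 ⟨(J t ω, J (t+1) ω), rfl, ?_⟩
    show (J (t+1) ω, Xproc S (t+1) ω) = (J (t+1) ω, 0)
    rw [hω]
  refine measure_mono_null hsub (measure_iUnion_null fun p => ?_)
  rw [one_step hJ hS hmc i₀ (t := t) (i := p.1)
    (fun w w' hww => by rw [hww t (le_refl t)]) (fun w hw => hw) (p.2, 0)]
  rw [show stepP q p.1 (p.2, 0) = ENNReal.ofReal (q p.1 p.2 0) from rfl, hq0, ENNReal.ofReal_zero,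
    zero_mul]

include hP h0 in
lemma prob_S0 (i₀ : E) : P i₀ {ω | S 0 ω = 0} = 1 := by
  have := hP i₀
  refine le_antisymm prob_le_one ?_
  rw [← h0 i₀]
  exact measure_mono fun ω h => h.2

end SLLN

section Determ

variable {J : ℕ → Ω → E} {S : ℕ → Ω → ℕ}

omit [Fintype E] [DecidableEq E] [MeasurableSpace Ω] in
lemma sum_Icc_one {M : Type*} [AddCommMonoid M] (f : ℕ → M) (N : ℕ) :
    ∑ n ∈ Finset.Icc 1 N, f n = ∑ t ∈ Finset.range N, f (t+1) := by
  induction N with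
  | zero => simp
  | succ N ih =>
    rw [Finset.sum_range_succ, ← ih, Finset.sum_Icc_succ_top (by omega)]

lemma sum_step_eq (ω : Ω) (i j : E) (k : ℕ) : ∀ N : ℕ,
    ∑ t ∈ Finset.range N, (if (J t ω = i ∧ traj J S ω (t+1) = (j,k)) then (1:ℝ) else 0)
      = ∑ m ∈ Finset.range (cnt (fun t => J t ω = i) N),
          (AmE J S i j k m).indicator (fun _ => (1:ℝ)) ω := by
  intro N
  induction N with
  | zero => rfl
  | succ N ih =>
    rw [Finset.sum_range_succ, ih, cnt_succ]
    by_cases hpN : J N ω = i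
    · rw [if_pos hpN, Finset.sum_range_succ]
      congr 1
      have hmem : ω ∈ AmE J S i j k (cnt (fun t => J t ω = i) N) ↔
          traj J S ω (N+1) = (j,k) := by
        constructor
        · intro hm
          obtain ⟨t, ⟨⟨hpt, hct⟩, hs⟩⟩ := Set.mem_iUnion.1 hm
          have htN : t = N := cnt_inj (fun t => J t ω = i) hpt hpN hct
          rw [← htN]
          exact hs
        · intro hs
          exact Set.mem_iUnion.2 ⟨N, ⟨hpN, rfl⟩, hs⟩
      rw [Set.indicator_apply]
      by_cases hstep : traj J S ω (N+1) = (j,k)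
      · rw [if_pos ⟨hpN, hstep⟩, if_pos (hmem.2 hstep)]
      · rw [if_neg (fun hc => hstep hc.2), if_neg (fun hc => hstep (hmem.1 hc))]
    · rw [if_neg hpN, if_neg (fun hc => hpN hc.1), add_zero, add_zero]

end Determ

/-- Strong consistency of the empirical estimator of the semi-Markov kernel
(Barbu–Limnios, Theorem 4.1). -/
theorem statement0 (q : E → E → ℕ → ℝ) (P : E → Measure Ω) (J : ℕ → Ω → E) (S : ℕ → Ω → ℕ)
    (hq : IsSemiMarkovKernel q) (hchain : IsMarkovRenewalChain P J S q)
    (hA : AssumptionA P J S) (i₀ : E) :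
    ∀ᵐ ω ∂(P i₀), ∀ (i j : E) (k : ℕ),
      Tendsto (fun M : ℕ => qhat J S M ω i j k) atTop (𝓝 (q i j k)) := by
  obtain ⟨hq_nonneg, hq0, hq_sum⟩ := hq
  obtain ⟨hP, hJ, hS, h0, hmc⟩ := hchain
  obtain ⟨hirr', hap, hA3⟩ := hA
  have hrec : ∀ i : E, ∀ᵐ ω ∂(P i), ∃ n, 1 ≤ n ∧ J n ω = i := fun i => (hA3 i).1
  have hirr : ∀ i j : E, 0 < P i {ω | ∃ n, 1 ≤ n ∧ J n ω = j} := hirr'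
  have hprob := hP i₀
  -- the almost-sure events
  have hae1 : ∀ᵐ ω ∂(P i₀), S 0 ω = 0 := by
    rw [ae_iff]
    have : {ω | ¬ S 0 ω = 0} = {ω | S 0 ω = 0}ᶜ := rfl
    rw [this, prob_compl_eq_zero_iff (hS 0 0)]
    exact prob_S0 hP h0 i₀
  have hae2 : ∀ᵐ ω ∂(P i₀), ∀ t : ℕ, Xproc S (t+1) ω ≠ 0 := by
    rw [ae_all_iff]
    intro t
    rw [ae_iff]
    have : {ω | ¬ Xproc S (t+1) ω ≠ 0} = {ω | Xproc S (t+1) ω = 0} := by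
      ext ω; simp [not_not]
    rw [this]
    exact prob_X_succ_zero hJ hS hmc hP hq0 i₀ t
  have hae3 : ∀ᵐ ω ∂(P i₀), ∀ e : E × ℕ, ω ∈ RecE J S e.1 e.2 := by
    rw [ae_all_iff]
    intro e
    rw [ae_iff]
    have : {ω | ¬ ω ∈ RecE J S e.1 e.2} = (RecE J S e.1 e.2)ᶜ := rfl
    rw [this]
    have hmR : MeasurableSet (RecE J S e.1 e.2) :=
      MeasurableSet.iUnion fun t => meas_det hJ hS (detBy_visP e.1 e.2 t)
    exact (prob_compl_eq_zero_iff hmR).2 (prob_Rec hJ hS hmc hP h0 hrec hirr i₀ e.1 e.2)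
  have hae4 : ∀ᵐ ω ∂(P i₀), ∀ e : E × E × ℕ, Tendsto (fun n : ℕ => (n:ℝ)⁻¹ *
      ∑ m ∈ Finset.range n, (AmE J S e.1 e.2.1 e.2.2 m).indicator (fun _ => (1:ℝ)) ω)
      atTop (𝓝 (q e.1 e.2.1 e.2.2)) := by
    rw [ae_all_iff]
    intro e
    exact slln_Am hJ hS hmc hP h0 hrec hirr i₀ e.1 e.2.1 e.2.2 (hq_nonneg e.1 e.2.1 e.2.2)
  filter_upwards [hae1, hae2, hae3, hae4] with ω h1 h2 h3 h4
  intro i j k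
  -- the deterministic part
  have hSmono : ∀ n, S n ω < S (n+1) ω := by
    intro n
    have hx := h2 n
    unfold Xproc at hx
    simp only [Nat.add_sub_cancel] at hx
    omega
  have hSn : ∀ n, n ≤ S n ω := by
    intro n
    induction n with
    | zero => exact Nat.zero_le _
    | succ n ih => exact lt_of_le_of_lt ih (hSmono n)
  have hNtend : Tendsto (fun M => Ncnt S M ω) atTop atTop := by
    rw [tendsto_atTop_atTop]
    intro b
    refine ⟨S b ω, fun M hM => ?_⟩
    have hbdd : BddAbove {n | S n ω ≤ M} := ⟨M, fun n hn => le_trans (hSn n) hn⟩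
    exact le_csSup hbdd (show S b ω ≤ M from hM)
  have hcnt_tend : Tendsto (fun N => cnt (fun t => J t ω = i) N) atTop atTop := by
    rw [tendsto_atTop_atTop]
    intro b
    obtain ⟨t, hvt⟩ := Set.mem_iUnion.1 (h3 (i, b))
    obtain ⟨hpt, hct⟩ := hvt
    refine ⟨t+1, fun N hN => ?_⟩
    have hc1 : cnt (fun t => J t ω = i) (t+1) = b + 1 := by
      rw [cnt_succ]
      rw [if_pos (show J t ω = i from hpt)]
      rw [show cnt (fun t => J t ω = i) t = b from hct]
    have hc2 := cnt_mono (fun t => J t ω = i) hN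
    omega
  have hc_tend : Tendsto (fun M => cnt (fun t => J t ω = i) (Ncnt S M ω)) atTop atTop :=
    hcnt_tend.comp hNtend
  have hlim := (h4 (i, j, k)).comp hc_tend
  refine Tendsto.congr ?_ hlim
  intro M
  show ((cnt (fun t => J t ω = i) (Ncnt S M ω) : ℝ))⁻¹ *
      ∑ m ∈ Finset.range (cnt (fun t => J t ω = i) (Ncnt S M ω)),
        (AmE J S i j k m).indicator (fun _ => (1:ℝ)) ω = qhat J S M ω i j k
  have hNvis : Nvis J S i M ω = cnt (fun t => J t ω = i) (Ncnt S M ω) := by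
    unfold Nvis
    generalize Ncnt S M ω = N
    induction N with
    | zero => simp [cnt_zero]
    | succ N ih =>
      rw [Finset.sum_Icc_succ_top (by omega), ih, cnt_succ]
      congr 1
      simp only [Nat.add_sub_cancel]
      split_ifs <;> rfl
  have hnum : (∑ n ∈ Finset.Icc 1 (Ncnt S M ω),
      if J (n-1) ω = i ∧ J n ω = j ∧ Xproc S n ω = k then (1:ℝ) else 0) =
      ∑ m ∈ Finset.range (cnt (fun t => J t ω = i) (Ncnt S M ω)),
        (AmE J S i j k m).indicator (fun _ => (1:ℝ)) ω := by
    rw [sum_Icc_one (fun n => if J (n-1) ω = i ∧ J n ω = j ∧ Xproc S n ω = k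
      then (1:ℝ) else 0) (Ncnt S M ω)]
    rw [← sum_step_eq ω i j k (Ncnt S M ω)]
    refine Finset.sum_congr rfl fun t _ => ?_
    refine if_congr ?_ rfl rfl
    constructor
    · rintro ⟨ha, hb, hc⟩
      refine ⟨by simpa using ha, ?_⟩
      show (J (t+1) ω, Xproc S (t+1) ω) = (j, k)
      rw [hb, hc]
    · rintro ⟨ha, hb⟩
      have hb' : J (t+1) ω = j ∧ Xproc S (t+1) ω = k := by
        have := hb
        rw [Prod.ext_iff] at this
        exact this
      exact ⟨by simpa using ha, hb'.1, hb'.2⟩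
  unfold qhat
  rw [hnum, hNvis, div_eq_inv_mul]

end SMCPaper
end
end

section
/- Under assumption (A), the estimator ψ̂(M) := (δI − q̂(M))^{(−1)} of the matrix convolution inverse ψ := (δI − q)^{(−1)} is strongly consistent: for every initial state i₀ ∈ E, almost surely under P_{i₀}, ψ̂_{ij}(k,M) → ψ_{ij}(k) as M → ∞ for every (i,j,k) ∈ Ẽ. -/
open MeasureTheory Filter Topology Finset ProbabilityTheory

noncomputable section

namespace SMCPaper

variable {E : Type} [Fintype E] [DecidableEq E] {Ω : Type} [MeasurableSpace Ω]

-- ===================== Part A : deterministic continuity of psiOf =====================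

lemma mpow_eq_zero_of_lt (A : E → E → ℕ → ℝ) (h0 : ∀ i j, A i j 0 = 0) :
    ∀ (n : ℕ) (i j : E) (k : ℕ), k < n → mpow A n i j k = 0 := by
  intro n
  induction n with
  | zero => intro i j k hk; omega
  | succ n ih =>
    intro i j k hk
    show mconv A (mpow A n) i j k = 0
    unfold mconv
    apply Finset.sum_eq_zero
    intro l hl
    apply Finset.sum_eq_zero
    intro u _
    rcases Nat.eq_zero_or_pos l with rfl | hl1
    · simp [h0]
    · have : k - l < n := by
        simp only [Finset.mem_range] at hl; omega
      rw [ih u j (k - l) this, mul_zero]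

lemma psiOf_eq_sum (A : E → E → ℕ → ℝ) (h0 : ∀ i j, A i j 0 = 0) (i j : E) (k : ℕ) :
    psiOf A i j k = ∑ n ∈ Finset.range (k + 1), mpow A n i j k := by
  unfold psiOf
  apply tsum_eq_sum
  intro n hn
  exact mpow_eq_zero_of_lt A h0 n i j k (by simpa using hn)

lemma tendsto_mpow {A : ℕ → E → E → ℕ → ℝ} {q : E → E → ℕ → ℝ}
    (hA : ∀ i j k, Tendsto (fun M => A M i j k) atTop (𝓝 (q i j k))) :
    ∀ (n : ℕ) (i j : E) (k : ℕ),
      Tendsto (fun M => mpow (A M) n i j k) atTop (𝓝 (mpow q n i j k)) := by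
  intro n
  induction n with
  | zero => intro i j k; simpa [mpow] using tendsto_const_nhds
  | succ n ih =>
    intro i j k
    show Tendsto (fun M => mconv (A M) (mpow (A M) n) i j k) atTop
      (𝓝 (mconv q (mpow q n) i j k))
    unfold mconv
    apply tendsto_finset_sum
    intro l _
    apply tendsto_finset_sum
    intro u _
    exact (hA i u l).mul (ih u j (k - l))

lemma tendsto_psiOf {A : ℕ → E → E → ℕ → ℝ} {q : E → E → ℕ → ℝ}
    (hA : ∀ i j k, Tendsto (fun M => A M i j k) atTop (𝓝 (q i j k)))
    (h0A : ∀ M i j, A M i j 0 = 0) (h0q : ∀ i j, q i j 0 = 0) (i j : E) (k : ℕ) :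
    Tendsto (fun M => psiOf (A M) i j k) atTop (𝓝 (psiOf q i j k)) := by
  have : ∀ M, psiOf (A M) i j k = ∑ n ∈ Finset.range (k + 1), mpow (A M) n i j k :=
    fun M => psiOf_eq_sum (A M) (h0A M) i j k
  simp only [this, psiOf_eq_sum q h0q i j k]
  exact tendsto_finset_sum _ fun n _ => tendsto_mpow hA n i j k

-- ===================== Part B : probabilistic part =====================

section PartB

variable (J : ℕ → Ω → E) (S : ℕ → Ω → ℕ)

/-- equality of trajectories before time `t` -/
def PEq (t : ℕ) (ω ω' : Ω) : Prop :=
  ∀ l < t, J l ω = J l ω' ∧ Xproc S l ω = Xproc S l ω'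

/-- `A` is determined by the trajectory before time `t` -/
def Det (t : ℕ) (A : Set Ω) : Prop :=
  ∀ ω ω', PEq J S t ω ω' → (ω ∈ A ↔ ω' ∈ A)

/-- elementary cylinder of length `t` -/
def fib (t : ℕ) (g : Fin t → E × ℕ) : Set Ω :=
  {ω | ∀ l : Fin t, J l ω = (g l).1 ∧ Xproc S l ω = (g l).2}

variable {J S}

lemma measX (hS : ∀ n k, MeasurableSet {ω | S n ω = k}) (n b : ℕ) :
    MeasurableSet {ω | Xproc S n ω = b} := by
  have : {ω | Xproc S n ω = b} =
      ⋃ (p : ℕ × ℕ) (_ : p.1 - p.2 = b), ({ω | S n ω = p.1} ∩ {ω | S (n-1) ω = p.2}) := by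
    ext ω
    simp only [Set.mem_setOf_eq, Set.mem_iUnion, Set.mem_inter_iff]
    constructor
    · intro h; exact ⟨(S n ω, S (n-1) ω), h, rfl, rfl⟩
    · rintro ⟨p, hp, h1, h2⟩; simp [Xproc, h1, h2, hp]
  rw [this]
  exact MeasurableSet.iUnion fun p => MeasurableSet.iUnion fun _ => (hS n p.1).inter (hS _ p.2)

lemma measFib (hJ : ∀ n i, MeasurableSet {ω | J n ω = i})
    (hS : ∀ n k, MeasurableSet {ω | S n ω = k}) (t : ℕ) (g : Fin t → E × ℕ) :
    MeasurableSet (fib J S t g) := by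
  have : fib J S t g = ⋂ l : Fin t, ({ω | J l ω = (g l).1} ∩ {ω | Xproc S l ω = (g l).2}) := by
    ext ω; simp [fib, Set.mem_iInter, forall_and]
  rw [this]
  exact MeasurableSet.iInter fun l => (hJ l _).inter (measX hS l _)

lemma fib_disjoint (t : ℕ) {g g' : Fin t → E × ℕ} (h : g ≠ g') :
    Disjoint (fib J S t g) (fib J S t g') := by
  rw [Set.disjoint_left]
  intro ω hω hω'
  apply h
  funext l
  have h1 := hω l; have h2 := hω' l
  ext
  · rw [← h1.1, ← h2.1]
  · rw [← h1.2, ← h2.2]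

lemma fib_iUnion (t : ℕ) : (⋃ g : Fin t → E × ℕ, fib J S t g) = Set.univ := by
  ext ω
  simp only [Set.mem_iUnion, Set.mem_univ, iff_true]
  exact ⟨fun l => (J l ω, Xproc S l ω), fun l => ⟨rfl, rfl⟩⟩

lemma det_subset_of_mem_fib {t : ℕ} {A : Set Ω} (hdet : Det J S t A) {g : Fin t → E × ℕ}
    {ω₀ : Ω} (h0 : ω₀ ∈ A ∩ fib J S t g) : fib J S t g ⊆ A := by
  intro ω' hω'
  have hPEq : PEq J S t ω₀ ω' := by
    intro l hl
    have h1 := h0.2 ⟨l, hl⟩; have h2 := hω' ⟨l, hl⟩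
    exact ⟨h1.1.trans h2.1.symm, h1.2.trans h2.2.symm⟩
  exact (hdet ω₀ ω' hPEq).mp h0.1

lemma inter_fib_cases {t : ℕ} {A : Set Ω} (hdet : Det J S t A) (g : Fin t → E × ℕ) :
    A ∩ fib J S t g = ∅ ∨ A ∩ fib J S t g = fib J S t g := by
  rcases Set.eq_empty_or_nonempty (A ∩ fib J S t g) with h | ⟨ω₀, h0⟩
  · exact Or.inl h
  · exact Or.inr (Set.inter_eq_right.mpr (det_subset_of_mem_fib hdet h0))

lemma det_measurable (hJ : ∀ n i, MeasurableSet {ω | J n ω = i})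
    (hS : ∀ n k, MeasurableSet {ω | S n ω = k}) {t : ℕ} {A : Set Ω} (hdet : Det J S t A) :
    MeasurableSet A := by
  have : A = ⋃ (g : Fin t → E × ℕ) (_ : fib J S t g ⊆ A), fib J S t g := by
    ext ω
    simp only [Set.mem_iUnion]
    constructor
    · intro hω
      refine ⟨fun l => (J l ω, Xproc S l ω), ?_, fun l => ⟨rfl, rfl⟩⟩
      exact det_subset_of_mem_fib hdet ⟨hω, fun l => ⟨rfl, rfl⟩⟩
    · rintro ⟨g, hsub, hg⟩; exact hsub hg
  rw [this]
  exact MeasurableSet.iUnion fun g => MeasurableSet.iUnion fun _ => measFib hJ hS t g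

/-- The fundamental one-step Markov ("master") lemma. -/
lemma master_s3 {q : E → E → ℕ → ℝ} {P : E → Measure Ω}
    (hchain : IsMarkovRenewalChain P J S q) (y x : E) {t : ℕ} (ht : 1 ≤ t)
    {A : Set Ω} (hdet : Det J S t A) (hx : ∀ ω ∈ A, J (t-1) ω = x) (j : E) (k : ℕ) :
    P y (A ∩ {ω | J t ω = j ∧ Xproc S t ω = k}) = ENNReal.ofReal (q x j k) * P y A := by
  obtain ⟨hP, hJm, hSm, hinit, hstep⟩ := hchain
  rcases t with _ | n
  · omega
  have hn1 : n + 1 - 1 = n := rfl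
  set St : Set Ω := {ω | J (n+1) ω = j ∧ Xproc S (n+1) ω = k} with hSt
  -- termwise identity
  have term : ∀ g : Fin (n+1) → E × ℕ,
      P y ((A ∩ fib J S (n+1) g) ∩ St) =
        ENNReal.ofReal (q x j k) * P y (A ∩ fib J S (n+1) g) := by
    intro g
    rcases inter_fib_cases hdet g with h | h
    · rw [h]; simp
    rw [h]
    rcases Set.eq_empty_or_nonempty (fib J S (n+1) g) with hemp | ⟨ω₀, h0⟩
    · rw [hemp]; simp
    have hx0 : (g ⟨n, by omega⟩).1 = x := by
      have hA0 : ω₀ ∈ A := by rw [← h] at h0; exact h0.1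
      have := (h0 ⟨n, by omega⟩).1
      rw [← this]
      exact hx ω₀ hA0
    -- apply the chain's Markov property
    set js : ℕ → E := fun l => if h : l < n + 1 then (g ⟨l, h⟩).1 else j with hjs
    set xs : ℕ → ℕ := fun l => if h : l < n + 1 then (g ⟨l, h⟩).2 else k with hxs
    have hfib : {ω | ∀ l ≤ n, J l ω = js l ∧ Xproc S l ω = xs l} = fib J S (n+1) g := by
      ext ω
      simp only [Set.mem_setOf_eq, fib]
      constructor
      · intro hω l
        have := hω l (by omega : (l : ℕ) ≤ n)
        simp only [hjs, hxs, dif_pos l.isLt] at this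
        convert this using 2 <;> exact (Fin.eta l l.isLt).symm
      · intro hω l hl
        have := hω ⟨l, by omega⟩
        simp only [hjs, hxs, dif_pos (by omega : l < n + 1)]
        exact this
    have key := hstep y n js xs
    rw [hfib] at key
    have hjn : js n = x := by simp only [hjs, dif_pos (by omega : n < n + 1)]; exact hx0
    have hjn1 : js (n+1) = j := by simp [hjs]
    have hxn1 : xs (n+1) = k := by simp [hxs]
    rw [hjn, hjn1, hxn1] at key
    rw [Set.inter_comm] at key
    exact key
  -- decompose A and A ∩ St over fibers
  have measPiece : ∀ g : Fin (n+1) → E × ℕ, MeasurableSet (A ∩ fib J S (n+1) g) := by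
    intro g
    rcases inter_fib_cases hdet g with h | h <;> rw [h]
    · exact MeasurableSet.empty
    · exact measFib hJm hSm _ g
  have measSt : MeasurableSet St :=
    (hJm (n+1) j).inter (measX hSm (n+1) k)
  have disj : Pairwise (Function.onFun Disjoint fun g => A ∩ fib J S (n+1) g) := fun g g' h =>
    ((fib_disjoint (n+1) h).mono (Set.inter_subset_right) (Set.inter_subset_right))
  have disj2 : Pairwise (Function.onFun Disjoint fun g => (A ∩ fib J S (n+1) g) ∩ St) :=
    fun g g' h => ((disj h).mono (Set.inter_subset_left) (Set.inter_subset_left))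
  have decompA : A = ⋃ g : Fin (n+1) → E × ℕ, A ∩ fib J S (n+1) g := by
    rw [← Set.inter_iUnion, fib_iUnion, Set.inter_univ]
  have decompASt : A ∩ St = ⋃ g : Fin (n+1) → E × ℕ, (A ∩ fib J S (n+1) g) ∩ St := by
    rw [← Set.iUnion_inter, ← decompA]
  rw [decompASt, measure_iUnion disj2 (fun g => (measPiece g).inter measSt)]
  conv_rhs => rw [decompA]
  rw [measure_iUnion disj (fun g => measPiece g)]
  rw [← ENNReal.tsum_mul_left]
  exact tsum_congr term

/-- avoidance event: no visit to `i` at times in `[t, t+m)` -/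
def Av (J : ℕ → Ω → E) (i : E) (t m : ℕ) : Set Ω :=
  {ω | ∀ l, t ≤ l → l < t + m → J l ω ≠ i}

lemma measAv (hJ : ∀ n i, MeasurableSet {ω | J n ω = i}) (i : E) (t m : ℕ) :
    MeasurableSet (Av J i t m) := by
  have : Av J i t m = ⋂ (l : ℕ) (_ : t ≤ l ∧ l < t + m), {ω | J l ω = i}ᶜ := by
    ext ω; simp only [Av, Set.mem_setOf_eq, Set.mem_iInter, Set.mem_compl_iff]; tauto
  rw [this]
  exact MeasurableSet.iInter fun l => MeasurableSet.iInter fun _ => (hJ l i).compl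

lemma Av_zero (i : E) (t : ℕ) : Av J i t 0 = Set.univ := by
  ext ω; simp only [Av, Set.mem_setOf_eq, Set.mem_univ, iff_true]
  intro l h1 h2; omega

lemma Av_succ (i : E) (t m : ℕ) :
    Av J i t (m + 1) =
      ⋃ (jk : {j : E // j ≠ i} × ℕ),
        ({ω | J t ω = (jk.1 : E) ∧ Xproc S t ω = jk.2} ∩ Av J i (t+1) m) := by
  ext ω
  simp only [Av, Set.mem_setOf_eq, Set.mem_iUnion, Set.mem_inter_iff]
  constructor
  · intro h
    refine ⟨(⟨J t ω, h t le_rfl (by omega)⟩, Xproc S t ω), ⟨rfl, rfl⟩, ?_⟩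
    intro l h1 h2; exact h l (by omega) (by omega)
  · rintro ⟨⟨⟨j, hj⟩, k⟩, ⟨h1, _⟩, h2⟩ l hl1 hl2
    rcases Nat.eq_or_lt_of_le hl1 with rfl | hl
    · rw [h1]; exact hj
    · exact h2 l (by omega) (by omega)

lemma Av_split (i : E) (t m m' : ℕ) :
    Av J i t (m + m') = Av J i t m ∩ Av J i (t + m) m' := by
  ext ω
  simp only [Av, Set.mem_setOf_eq, Set.mem_inter_iff]
  constructor
  · intro h; exact ⟨fun l h1 h2 => h l h1 (by omega), fun l h1 h2 => h l (by omega) (by omega)⟩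
  · rintro ⟨h1, h2⟩ l hl1 hl2
    by_cases hc : l < t + m
    · exact h1 l hl1 hc
    · exact h2 l (by omega) (by omega)

lemma det_Av (i : E) (t m : ℕ) (h : t + m ≤ t') : Det J S t' (Av J i t m) := by
  intro ω ω' hP
  simp only [Av, Set.mem_setOf_eq]
  constructor
  · intro hω l h1 h2; rw [← (hP l (by omega)).1]; exact hω l h1 h2
  · intro hω l h1 h2; rw [(hP l (by omega)).1]; exact hω l h1 h2

lemma det_J (z : E) (n : ℕ) (h : n < t') : Det J S t' {ω | J n ω = z} := by
  intro ω ω' hP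
  simp only [Set.mem_setOf_eq]
  rw [(hP n h).1]

/-- The iterated transfer ("Markov") lemma for avoidance events. -/
lemma transfer {q : E → E → ℕ → ℝ} {P : E → Measure Ω}
    (hchain : IsMarkovRenewalChain P J S q) (i : E) :
    ∀ (m : ℕ) (y x : E) (t : ℕ), 1 ≤ t → ∀ (A : Set Ω), Det J S t A →
      (∀ ω ∈ A, J (t-1) ω = x) →
      P y (A ∩ Av J i t m) = P x (Av J i 1 m) * P y A := by
  have hP := hchain.1
  have hJm := hchain.2.1
  have hSm := hchain.2.2.1
  have hinit := hchain.2.2.2.1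
  intro m
  induction m with
  | zero =>
    intro y x t ht A hdet hx
    haveI := hP x
    simp [Av_zero]
  | succ m ih =>
    have decomp : ∀ (y x : E) (t : ℕ), 1 ≤ t → ∀ (A : Set Ω), Det J S t A →
        (∀ ω ∈ A, J (t-1) ω = x) →
        P y (A ∩ Av J i t (m+1)) =
          (∑' jk : {j : E // j ≠ i} × ℕ,
            ENNReal.ofReal (q x (jk.1 : E) jk.2) * P (jk.1 : E) (Av J i 1 m)) * P y A := by
      intro y x t ht A hdet hx
      have hdecomp : A ∩ Av J i t (m+1) =
          ⋃ (jk : {j : E // j ≠ i} × ℕ),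
            ((A ∩ {ω | J t ω = (jk.1 : E) ∧ Xproc S t ω = jk.2}) ∩ Av J i (t+1) m) := by
        rw [Av_succ (S := S), Set.inter_iUnion]
        exact Set.iUnion_congr fun jk => by rw [Set.inter_assoc]
      have hdetA' : ∀ jk : {j : E // j ≠ i} × ℕ,
          Det J S (t+1) (A ∩ {ω | J t ω = (jk.1 : E) ∧ Xproc S t ω = jk.2}) := by
        intro jk ω ω' hPEq
        have h1 : PEq J S t ω ω' := fun l hl => hPEq l (by omega)
        have h2 := hPEq t (by omega)
        simp only [Set.mem_inter_iff, Set.mem_setOf_eq]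
        rw [hdet ω ω' h1, h2.1, h2.2]
      have hmeas : ∀ jk : {j : E // j ≠ i} × ℕ,
          MeasurableSet ((A ∩ {ω | J t ω = (jk.1 : E) ∧ Xproc S t ω = jk.2}) ∩ Av J i (t+1) m) := by
        intro jk
        exact (det_measurable hJm hSm (hdetA' jk)).inter (measAv hJm i (t+1) m)
      have hdisj : Pairwise (Function.onFun Disjoint
          (fun jk : {j : E // j ≠ i} × ℕ =>
            (A ∩ {ω | J t ω = (jk.1 : E) ∧ Xproc S t ω = jk.2}) ∩ Av J i (t+1) m)) := by
        intro jk jk' hne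
        rw [Function.onFun, Set.disjoint_left]
        rintro ω ⟨⟨-, h1, h2⟩, -⟩ ⟨⟨-, h1', h2'⟩, -⟩
        apply hne
        have : (jk.1 : E) = (jk'.1 : E) := h1 ▸ h1'
        ext
        · exact this
        · rw [← h2, ← h2']
      rw [hdecomp, measure_iUnion hdisj hmeas]
      rw [← ENNReal.tsum_mul_right]
      apply tsum_congr
      intro jk
      have step1 := ih y (jk.1 : E) (t+1) (by omega)
        (A ∩ {ω | J t ω = (jk.1 : E) ∧ Xproc S t ω = jk.2}) (hdetA' jk)
        (fun ω hω => by simpa using hω.2.1)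
      rw [step1]
      have step2 := master_s3 hchain y x ht hdet hx (jk.1 : E) jk.2
      rw [step2]
      ring
    intro y x t ht A hdet hx
    -- apply decomposition to the left side, and to the canonical start
    rw [decomp y x t ht A hdet hx]
    congr 1
    -- P x (Av i 1 (m+1)) = the same tsum
    haveI := hP x
    have hA0 : P x {ω | J 0 ω = x} = 1 := by
      refine le_antisymm prob_le_one ?_
      rw [← hinit x]
      exact measure_mono fun ω hω => hω.1
    have h1 : P x (Av J i 1 (m+1)) = P x ({ω | J 0 ω = x} ∩ Av J i 1 (m+1)) := by
      rw [Set.inter_comm]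
      rw [measure_inter_conull]
      rw [← prob_compl_eq_zero_iff (hJm 0 x)] at hA0
      exact hA0
    rw [h1, decomp x x 1 le_rfl {ω | J 0 ω = x} (det_J x 0 (by omega))
      (fun ω hω => hω), hA0, mul_one]

lemma Det.inter {t : ℕ} {A B : Set Ω} (hA : Det J S t A) (hB : Det J S t B) :
    Det J S t (A ∩ B) := by
  intro ω ω' h
  simp only [Set.mem_inter_iff, hA ω ω' h, hB ω ω' h]

lemma exists_c {q : E → E → ℕ → ℝ} {P : E → Measure Ω}
    (hchain : IsMarkovRenewalChain P J S q) (i : E)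
    (hA1 : ∀ x : E, 0 < P x {ω | ∃ n, 1 ≤ n ∧ J n ω = i}) :
    ∃ m₀ : ℕ, 1 ≤ m₀ ∧ ∃ c : ENNReal, c < 1 ∧ ∀ x, P x (Av J i 1 m₀) ≤ c := by
  have hJm := hchain.2.1
  have hP := hchain.1
  have hchoose : ∀ x : E, ∃ n, 1 ≤ n ∧ 0 < P x {ω | J n ω = i} := by
    intro x
    by_contra h
    push_neg at h
    have hnull : P x {ω | ∃ n, 1 ≤ n ∧ J n ω = i} = 0 := by
      have hsub : {ω | ∃ n, 1 ≤ n ∧ J n ω = i} ⊆ ⋃ (n : ℕ) (_ : 1 ≤ n), {ω | J n ω = i} := by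
        rintro ω ⟨n, hn1, hni⟩
        simp only [Set.mem_iUnion]
        exact ⟨n, hn1, hni⟩
      apply measure_mono_null hsub
      rw [measure_iUnion_null_iff]
      intro n
      rw [measure_iUnion_null_iff]
      intro hn
      exact le_antisymm (h n hn) zero_le
    exact absurd hnull (hA1 x).ne'
  choose nf hn1 hnpos using hchoose
  refine ⟨Finset.univ.sup nf + 1, by omega,
    Finset.univ.sup (fun x => P x (Av J i 1 (Finset.univ.sup nf + 1))), ?_, ?_⟩
  · rw [Finset.sup_lt_iff (by simp : (⊥ : ENNReal) < 1)]
    intro x _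
    haveI := hP x
    have hsub : Av J i 1 (Finset.univ.sup nf + 1) ⊆ {ω | J (nf x) ω = i}ᶜ := by
      intro ω hω
      exact hω (nf x) (hn1 x) (by have := Finset.le_sup (f := nf) (Finset.mem_univ x); omega)
    calc P x (Av J i 1 (Finset.univ.sup nf + 1)) ≤ P x {ω | J (nf x) ω = i}ᶜ :=
          measure_mono hsub
      _ = 1 - P x {ω | J (nf x) ω = i} := prob_compl_eq_one_sub (hJm (nf x) i)
      _ < 1 := ENNReal.sub_lt_self ENNReal.one_ne_top one_ne_zero (hnpos x).ne'
  · intro x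
    exact Finset.le_sup (f := fun x => P x (Av J i 1 (Finset.univ.sup nf + 1)))
      (Finset.mem_univ x)

lemma sum_J_eq_one {q : E → E → ℕ → ℝ} {P : E → Measure Ω}
    (hchain : IsMarkovRenewalChain P J S q) (y : E) (n : ℕ) :
    ∑ z : E, P y {ω | J n ω = z} = 1 := by
  haveI := hchain.1 y
  have hJm := hchain.2.1
  have : (⋃ z : E, {ω | J n ω = z}) = Set.univ := by
    ext ω; simp only [Set.mem_iUnion, Set.mem_setOf_eq, Set.mem_univ, iff_true]
    exact ⟨J n ω, rfl⟩
  rw [← measure_univ (μ := P y), ← this,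
    measure_iUnion (fun z z' h => by
      rw [Function.onFun, Set.disjoint_left]
      rintro ω hω hω'
      exact h (hω ▸ hω' ▸ rfl)) (fun z => hJm n z), tsum_fintype]

lemma bad_null {q : E → E → ℕ → ℝ} {P : E → Measure Ω}
    (hchain : IsMarkovRenewalChain P J S q) (i : E)
    (hA1 : ∀ x : E, 0 < P x {ω | ∃ n, 1 ≤ n ∧ J n ω = i}) (y : E) (n : ℕ) :
    P y {ω | ∀ l, n + 1 ≤ l → J l ω ≠ i} = 0 := by
  obtain ⟨m₀, hm₀, c, hc, hcb⟩ := exists_c hchain i hA1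
  have hJm := hchain.2.1
  have hSm := hchain.2.2.1
  have hP := hchain.1
  -- iterated bound
  have hb : ∀ (R : ℕ) (x : E), P x (Av J i 1 (R * m₀)) ≤ c ^ R := by
    intro R
    induction R with
    | zero =>
      intro x
      haveI := hP x
      simp [Av_zero]
    | succ R ih =>
      intro x
      haveI := hP x
      have hsplit : Av J i 1 ((R + 1) * m₀) = Av J i 1 m₀ ∩ Av J i (1 + m₀) (R * m₀) := by
        have h1 : (R + 1) * m₀ = m₀ + R * m₀ := by ring
        rw [h1, Av_split]
      have hdec : Av J i 1 m₀ ∩ Av J i (1 + m₀) (R * m₀) =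
          ⋃ z : E, ((Av J i 1 m₀ ∩ {ω | J m₀ ω = z}) ∩ Av J i (1 + m₀) (R * m₀)) := by
        ext ω
        simp only [Set.mem_iUnion, Set.mem_inter_iff, Set.mem_setOf_eq]
        constructor
        · intro h; exact ⟨J m₀ ω, ⟨h.1, rfl⟩, h.2⟩
        · rintro ⟨z, ⟨h1, -⟩, h2⟩; exact ⟨h1, h2⟩
      have hdetz : ∀ z : E, Det J S (m₀ + 1) (Av J i 1 m₀ ∩ {ω | J m₀ ω = z}) :=
        fun z => (det_Av i 1 m₀ (by omega)).inter (det_J z m₀ (by omega))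
      have hdisj : Pairwise (Function.onFun Disjoint
          (fun z : E => (Av J i 1 m₀ ∩ {ω | J m₀ ω = z}) ∩ Av J i (1 + m₀) (R * m₀))) := by
        intro z z' h
        rw [Function.onFun, Set.disjoint_left]
        rintro ω ⟨⟨-, h1⟩, -⟩ ⟨⟨-, h1'⟩, -⟩
        exact h (h1 ▸ h1' ▸ rfl)
      have hmeasz : ∀ z : E,
          MeasurableSet ((Av J i 1 m₀ ∩ {ω | J m₀ ω = z}) ∩ Av J i (1 + m₀) (R * m₀)) :=
        fun z => (det_measurable hJm hSm (hdetz z)).inter (measAv hJm i _ _)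
      have htrans : ∀ z : E,
          P x ((Av J i 1 m₀ ∩ {ω | J m₀ ω = z}) ∩ Av J i (1 + m₀) (R * m₀)) =
            P z (Av J i 1 (R * m₀)) * P x (Av J i 1 m₀ ∩ {ω | J m₀ ω = z}) := by
        intro z
        have := transfer hchain i (R * m₀) x z (m₀ + 1) (by omega)
          (Av J i 1 m₀ ∩ {ω | J m₀ ω = z}) (hdetz z) (fun ω hω => by simpa using hω.2)
        rw [← this]
        congr 1
        rw [Nat.add_comm m₀ 1]
      calc P x (Av J i 1 ((R + 1) * m₀))
          = ∑ z : E, P x ((Av J i 1 m₀ ∩ {ω | J m₀ ω = z}) ∩ Av J i (1 + m₀) (R * m₀)) := by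
            rw [hsplit, hdec, measure_iUnion hdisj hmeasz, tsum_fintype]
        _ ≤ ∑ z : E, c ^ R * P x (Av J i 1 m₀ ∩ {ω | J m₀ ω = z}) := by
            apply Finset.sum_le_sum
            intro z _
            rw [htrans z]
            exact mul_le_mul_left (ih z) _
        _ = c ^ R * P x (⋃ z : E, (Av J i 1 m₀ ∩ {ω | J m₀ ω = z})) := by
            rw [← Finset.mul_sum]
            congr 1
            rw [measure_iUnion (fun z z' h => by
              rw [Function.onFun, Set.disjoint_left]
              rintro ω ⟨-, h1⟩ ⟨-, h1'⟩
              exact h (h1 ▸ h1' ▸ rfl)) (fun z =>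
                (det_measurable hJm hSm (hdetz z))), tsum_fintype]
        _ ≤ c ^ R * c := by
            apply mul_le_mul_right
            refine le_trans (measure_mono ?_) (hcb x)
            intro ω
            simp only [Set.mem_iUnion, Set.mem_inter_iff]
            rintro ⟨z, h1, -⟩
            exact h1
        _ = c ^ (R + 1) := (pow_succ c R).symm
  -- bound on the bad set
  haveI := hP y
  have hBad : ∀ R : ℕ, P y {ω | ∀ l, n + 1 ≤ l → J l ω ≠ i} ≤ c ^ R := by
    intro R
    have hsub : {ω | ∀ l, n + 1 ≤ l → J l ω ≠ i} ⊆ Av J i (n + 1) (R * m₀) :=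
      fun ω hω l h1 _ => hω l h1
    refine le_trans (measure_mono hsub) ?_
    have hdec : Av J i (n + 1) (R * m₀) =
        ⋃ z : E, ({ω | J n ω = z} ∩ Av J i (n + 1) (R * m₀)) := by
      ext ω
      simp only [Set.mem_iUnion, Set.mem_inter_iff, Set.mem_setOf_eq]
      constructor
      · intro h; exact ⟨J n ω, rfl, h⟩
      · rintro ⟨z, -, h⟩; exact h
    have hdetz : ∀ z : E, Det J S (n + 1) {ω | J n ω = z} := fun z => det_J z n (by omega)
    calc P y (Av J i (n + 1) (R * m₀))
        = ∑ z : E, P y ({ω | J n ω = z} ∩ Av J i (n + 1) (R * m₀)) := by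
          conv_lhs => rw [hdec]
          rw [measure_iUnion (fun z z' h => by
            rw [Function.onFun, Set.disjoint_left]
            rintro ω ⟨h1, -⟩ ⟨h1', -⟩
            exact h (h1 ▸ h1' ▸ rfl)) (fun z =>
              (hJm n z).inter (measAv hJm i _ _)), tsum_fintype]
      _ = ∑ z : E, P z (Av J i 1 (R * m₀)) * P y {ω | J n ω = z} := by
          apply Finset.sum_congr rfl
          intro z _
          exact transfer hchain i (R * m₀) y z (n + 1) (by omega) _ (hdetz z)
            (fun ω hω => by simpa using hω)
      _ ≤ ∑ z : E, c ^ R * P y {ω | J n ω = z} := by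
          apply Finset.sum_le_sum
          intro z _
          exact mul_le_mul_left (hb R z) _
      _ = c ^ R := by
          rw [← Finset.mul_sum, sum_J_eq_one hchain y n, mul_one]
  -- conclude
  have hfin : P y {ω | ∀ l, n + 1 ≤ l → J l ω ≠ i} ≠ ⊤ :=
    (lt_of_le_of_lt prob_le_one (by simp)).ne
  have htends : Tendsto (fun R : ℕ => c.toReal ^ R) atTop (𝓝 0) := by
    apply tendsto_pow_atTop_nhds_zero_of_lt_one ENNReal.toReal_nonneg
    have := ENNReal.toReal_strict_mono ENNReal.one_ne_top hc
    simpa using this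
  have hle : (P y {ω | ∀ l, n + 1 ≤ l → J l ω ≠ i}).toReal ≤ 0 := by
    apply ge_of_tendsto htends
    filter_upwards with R
    calc (P y {ω | ∀ l, n + 1 ≤ l → J l ω ≠ i}).toReal ≤ (c ^ R).toReal := by
          apply ENNReal.toReal_mono _ (hBad R)
          exact (ENNReal.pow_ne_top hc.ne_top)
      _ = c.toReal ^ R := ENNReal.toReal_pow c R
  have : (P y {ω | ∀ l, n + 1 ≤ l → J l ω ≠ i}).toReal = 0 :=
    le_antisymm hle ENNReal.toReal_nonneg
  rwa [ENNReal.toReal_eq_zero_iff, or_iff_left hfin] at this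

/-- almost surely, the embedded chain visits `i` infinitely often -/
lemma ae_visits {q : E → E → ℕ → ℝ} {P : E → Measure Ω}
    (hchain : IsMarkovRenewalChain P J S q) (i : E)
    (hA1 : ∀ x : E, 0 < P x {ω | ∃ n, 1 ≤ n ∧ J n ω = i}) (y : E) :
    ∀ᵐ ω ∂(P y), ∀ n : ℕ, ∃ l, n + 1 ≤ l ∧ J l ω = i := by
  rw [ae_iff]
  have hsub : {ω | ¬ ∀ n : ℕ, ∃ l, n + 1 ≤ l ∧ J l ω = i} ⊆
      ⋃ n : ℕ, {ω | ∀ l, n + 1 ≤ l → J l ω ≠ i} := by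
    intro ω hω
    simp only [Set.mem_setOf_eq, not_forall, not_exists] at hω
    obtain ⟨n, hn⟩ := hω
    simp only [Set.mem_iUnion, Set.mem_setOf_eq]
    exact ⟨n, fun l hl => by have := hn l; tauto⟩
  refine measure_mono_null hsub ?_
  rw [measure_iUnion_null_iff]
  exact fun n => bad_null hchain i hA1 y n

-- ================== visit counts and successive visit times ==================

/-- number of visits of `J (l-1)` to `i` for `1 ≤ l ≤ n` -/
def Vc (J : ℕ → Ω → E) (i : E) (n : ℕ) (ω : Ω) : ℕ :=
  ∑ l ∈ Finset.Icc 1 n, if J (l-1) ω = i then 1 else 0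

/-- time of the `(m+1)`-st visit -/
def Tm (J : ℕ → Ω → E) (i : E) (m : ℕ) (ω : Ω) : ℕ := sInf {n | 1 ≤ n ∧ Vc J i n ω = m + 1}

lemma Vc_zero (i : E) (ω : Ω) : Vc J i 0 ω = 0 := by simp [Vc]

lemma Vc_succ (i : E) (n : ℕ) (ω : Ω) :
    Vc J i (n+1) ω = Vc J i n ω + (if J n ω = i then 1 else 0) := by
  unfold Vc
  rw [Finset.sum_Icc_succ_top (by omega : 1 ≤ n + 1)]
  rfl

lemma Vc_mono (i : E) (ω : Ω) : Monotone (fun n => Vc J i n ω) := by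
  apply monotone_nat_of_le_succ
  intro n
  rw [Vc_succ]
  omega

lemma Vc_le_succ (i : E) (n : ℕ) (ω : Ω) : Vc J i (n+1) ω ≤ Vc J i n ω + 1 := by
  rw [Vc_succ]; split <;> omega

lemma Tm_eq_iff {i : E} {m t : ℕ} {ω : Ω} (ht : 1 ≤ t) :
    Tm J i m ω = t ↔
      (Vc J i t ω = m + 1 ∧ ∀ n < t, ¬(1 ≤ n ∧ Vc J i n ω = m + 1)) := by
  constructor
  · intro h
    have hne : {n | 1 ≤ n ∧ Vc J i n ω = m + 1}.Nonempty := by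
      by_contra hc
      rw [Set.not_nonempty_iff_eq_empty] at hc
      rw [Tm, hc, Nat.sInf_empty] at h
      omega
    have hmem := Nat.sInf_mem hne
    rw [Tm] at h
    rw [h] at hmem
    exact ⟨hmem.2, fun n hn => Nat.notMem_of_lt_sInf (h ▸ hn)⟩
  · rintro ⟨h1, h2⟩
    have hmem : t ∈ {n | 1 ≤ n ∧ Vc J i n ω = m + 1} := ⟨ht, h1⟩
    refine le_antisymm (Nat.sInf_le hmem) (le_csInf ⟨t, hmem⟩ ?_)
    intro b hb
    by_contra hbt
    exact h2 b (by omega) hb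

lemma Tm_endpoint {i : E} {m t : ℕ} {ω : Ω} (ht : 1 ≤ t) (h : Tm J i m ω = t) :
    J (t-1) ω = i := by
  rw [Tm_eq_iff ht] at h
  obtain ⟨h1, h2⟩ := h
  by_contra hJ
  have hsucc : Vc J i t ω = Vc J i (t-1) ω := by
    have := Vc_succ (J := J) i (t-1) ω
    rw [Nat.sub_add_cancel ht] at this
    rw [this, if_neg hJ, add_zero]
  rcases Nat.eq_or_lt_of_le ht with h1t | h1t
  · rw [← h1t] at hsucc h1
    rw [hsucc, Vc_zero] at h1
    omega
  · exact h2 (t-1) (by omega) ⟨by omega, by rw [← hsucc]; exact h1⟩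

lemma Tfact {i : E} {n : ℕ} {ω : Ω} (h : J n ω = i) : Tm J i (Vc J i n ω) ω = n + 1 := by
  rw [Tm_eq_iff (by omega)]
  constructor
  · rw [Vc_succ, if_pos h]
  · intro n' hn' hcon
    have := Vc_mono (J := J) i ω (show n' ≤ n by omega)
    simp only at this
    omega

lemma Vc_congr {t : ℕ} {ω ω' : Ω} (h : PEq J S t ω ω') (i : E) :
    ∀ n ≤ t, Vc J i n ω = Vc J i n ω' := by
  intro n hn
  unfold Vc
  apply Finset.sum_congr rfl
  intro l hl
  simp only [Finset.mem_Icc] at hl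
  rw [(h (l-1) (by omega)).1]

-- the marks
def markSet (J : ℕ → Ω → E) (S : ℕ → Ω → ℕ) (i j : E) (k m : ℕ) : Set Ω :=
  {ω | J (Tm J i m ω) ω = j ∧ Xproc S (Tm J i m ω) ω = k}

def xi (J : ℕ → Ω → E) (S : ℕ → Ω → ℕ) (i j : E) (k m : ℕ) : Ω → ℝ :=
  (markSet J S i j k m).indicator (fun _ => 1)

/-- key pathwise identity: empirical counts as sums of marks -/
lemma key_sum (i j : E) (k : ℕ) (ω : Ω) (n : ℕ) :
    (∑ l ∈ Finset.Icc 1 n,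
      if J (l-1) ω = i ∧ J l ω = j ∧ Xproc S l ω = k then (1:ℝ) else 0) =
      ∑ m ∈ Finset.range (Vc J i n ω), xi J S i j k m ω := by
  induction n with
  | zero => simp [Vc_zero]
  | succ n ih =>
    rw [Finset.sum_Icc_succ_top (by omega : 1 ≤ n + 1), Vc_succ]
    have hred : n + 1 - 1 = n := rfl
    rw [hred]
    by_cases h : J n ω = i
    · rw [if_pos h, Finset.sum_range_succ, ← ih]
      have hT : Tm J i (Vc J i n ω) ω = n + 1 := Tfact h
      have hxi : xi J S i j k (Vc J i n ω) ω =
          if J (n+1) ω = j ∧ Xproc S (n+1) ω = k then 1 else 0 := by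
        simp only [xi, markSet, Set.indicator_apply, Set.mem_setOf_eq, hT]
      rw [hxi]
      simp only [h, true_and]
    · rw [if_neg h, add_zero, ← ih]
      simp only [h, false_and, if_false, add_zero]

-- ================== a.s. facts about trajectories ==================

lemma ae_X_pos {q : E → E → ℕ → ℝ} {P : E → Measure Ω}
    (hchain : IsMarkovRenewalChain P J S q) (hq0 : ∀ i j, q i j 0 = 0) (y : E) :
    ∀ᵐ ω ∂(P y), ∀ n : ℕ, Xproc S (n+1) ω ≠ 0 := by
  rw [ae_iff]
  have hsub : {ω | ¬ ∀ n : ℕ, Xproc S (n+1) ω ≠ 0} ⊆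
      ⋃ (n : ℕ) (xj : E × E),
        ({ω | J n ω = xj.1} ∩ {ω | J (n+1) ω = xj.2 ∧ Xproc S (n+1) ω = 0}) := by
    intro ω hω
    simp only [Set.mem_setOf_eq, not_forall, not_not] at hω
    obtain ⟨n, hn⟩ := hω
    simp only [Set.mem_iUnion, Set.mem_inter_iff, Set.mem_setOf_eq]
    exact ⟨n, (J n ω, J (n+1) ω), rfl, rfl, hn⟩
  refine measure_mono_null hsub ?_
  rw [measure_iUnion_null_iff]
  intro n
  rw [measure_iUnion_null_iff]
  rintro ⟨x, j⟩
  have := master_s3 hchain y x (t := n+1) (by omega) (det_J x n (by omega))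
    (fun ω hω => by simpa using hω) j 0
  rw [this, hq0, ENNReal.ofReal_zero, zero_mul]

lemma S_ge (ω : Ω) (hS0 : S 0 ω = 0) (hX : ∀ n : ℕ, Xproc S (n+1) ω ≠ 0) :
    ∀ n, n ≤ S n ω ∧ ∀ m < n, S m ω < S n ω := by
  intro n
  induction n with
  | zero => exact ⟨by omega, by omega⟩
  | succ n ih =>
    have hX' := hX n
    unfold Xproc at hX'
    have hred : n + 1 - 1 = n := rfl
    rw [hred] at hX'
    have hlt : S n ω < S (n+1) ω := by omega
    refine ⟨by omega, ?_⟩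
    intro m hm
    rcases Nat.lt_or_ge m n with h | h
    · exact lt_trans (ih.2 m h) hlt
    · have : m = n := by omega
      rw [this]; exact hlt

lemma Ncnt_ge (ω : Ω) (hS0 : S 0 ω = 0) (hX : ∀ n : ℕ, Xproc S (n+1) ω ≠ 0)
    (n M : ℕ) (h : S n ω ≤ M) : n ≤ Ncnt S M ω := by
  apply le_csSup
  · refine ⟨M, ?_⟩
    intro b hb
    simp only [Set.mem_setOf_eq] at hb
    calc b ≤ S b ω := (S_ge ω hS0 hX b).1
      _ ≤ M := hb
  · exact h

lemma Ncnt_tendsto (ω : Ω) (hS0 : S 0 ω = 0) (hX : ∀ n : ℕ, Xproc S (n+1) ω ≠ 0) :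
    Tendsto (fun M => Ncnt S M ω) atTop atTop := by
  rw [tendsto_atTop_atTop]
  intro b
  exact ⟨S b ω, fun M hM => Ncnt_ge ω hS0 hX b M hM⟩

lemma Vc_tendsto (i : E) (ω : Ω) (hgood : ∀ n : ℕ, ∃ l, n + 1 ≤ l ∧ J l ω = i) :
    Tendsto (fun n => Vc J i n ω) atTop atTop := by
  have hunb : ∀ m : ℕ, ∃ n, m ≤ Vc J i n ω := by
    intro m
    induction m with
    | zero => exact ⟨0, by omega⟩
    | succ m ih =>
      obtain ⟨n, hn⟩ := ih
      obtain ⟨l, hl1, hl2⟩ := hgood n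
      refine ⟨l + 1, ?_⟩
      rw [Vc_succ, if_pos hl2]
      have := Vc_mono (J := J) i ω (show n ≤ l by omega)
      simp only at this
      omega
  rw [tendsto_atTop_atTop]
  intro b
  obtain ⟨n, hn⟩ := hunb b
  exact ⟨n, fun n' hn' => le_trans hn (Vc_mono i ω hn')⟩

lemma exists_Tm (i : E) (ω : Ω) (hgood : ∀ n : ℕ, ∃ l, n + 1 ≤ l ∧ J l ω = i) (m : ℕ) :
    ∃ t, 1 ≤ t ∧ Tm J i m ω = t := by
  -- discrete intermediate value: Vc hits m+1
  have hunb : {n | m + 1 ≤ Vc J i n ω}.Nonempty := by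
    have := Vc_tendsto i ω hgood
    rw [tendsto_atTop_atTop] at this
    obtain ⟨n, hn⟩ := this (m+1)
    exact ⟨n, hn n le_rfl⟩
  have hmem := Nat.sInf_mem hunb
  set n₀ := sInf {n | m + 1 ≤ Vc J i n ω} with hn₀
  have h1 : 1 ≤ n₀ := by
    by_contra h
    have hz : n₀ = 0 := by omega
    rw [hz] at hmem
    simp only [Set.mem_setOf_eq, Vc_zero] at hmem
    omega
  have hprev : ¬ (m + 1 ≤ Vc J i (n₀ - 1) ω) := by
    intro hcon
    have h2 := Nat.sInf_le (s := {n | m + 1 ≤ Vc J i n ω})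
      (show n₀ - 1 ∈ {n | m + 1 ≤ Vc J i n ω} from hcon)
    rw [← hn₀] at h2
    omega
  have heq : Vc J i n₀ ω = m + 1 := by
    have hstep := Vc_le_succ (J := J) i (n₀ - 1) ω
    rw [Nat.sub_add_cancel h1] at hstep
    have h3 : m + 1 ≤ Vc J i n₀ ω := hmem
    omega
  refine ⟨Tm J i m ω, ?_, rfl⟩
  have hmem2 : n₀ ∈ {n | 1 ≤ n ∧ Vc J i n ω = m + 1} := ⟨h1, heq⟩
  have := Nat.sInf_mem (⟨n₀, hmem2⟩ : {n | 1 ≤ n ∧ Vc J i n ω = m + 1}.Nonempty)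
  exact this.1

-- ================== indicator helpers ==================

section Indicator

variable {μ : Measure Ω} [IsProbabilityMeasure μ] {A B : Set Ω}

lemma prod_compl_right (hB : MeasurableSet B) (h : μ (A ∩ B) = μ A * μ B) :
    μ (A ∩ Bᶜ) = μ A * μ Bᶜ := by
  have h1 : μ (A ∩ B) + μ (A \ B) = μ A := measure_inter_add_diff A hB
  rw [Set.diff_eq] at h1
  have h2 : μ (A ∩ B) + μ A * μ Bᶜ = μ A := by
    rw [h, ← mul_add, measure_add_measure_compl hB, measure_univ, mul_one]
  have h3 : μ (A ∩ B) + μ (A ∩ Bᶜ) = μ (A ∩ B) + μ A * μ Bᶜ := by rw [h1, h2]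
  exact (ENNReal.add_right_inj (measure_ne_top μ _)).mp h3

lemma measure_inter_combo (hA : MeasurableSet A) (hB : MeasurableSet B)
    (h : μ (A ∩ B) = μ A * μ B) :
    ∀ U V : Set Ω, (U = ∅ ∨ U = A ∨ U = Aᶜ ∨ U = Set.univ) →
      (V = ∅ ∨ V = B ∨ V = Bᶜ ∨ V = Set.univ) → μ (U ∩ V) = μ U * μ V := by
  have hAB' : μ (A ∩ Bᶜ) = μ A * μ Bᶜ := prod_compl_right hB h
  have hA'B : μ (Aᶜ ∩ B) = μ Aᶜ * μ B := by
    rw [Set.inter_comm, mul_comm]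
    exact prod_compl_right hA (by rw [Set.inter_comm, mul_comm] at h; exact h)
  have hA'B' : μ (Aᶜ ∩ Bᶜ) = μ Aᶜ * μ Bᶜ := prod_compl_right hB hA'B
  rintro U V (rfl | rfl | rfl | rfl) (rfl | rfl | rfl | rfl) <;>
    simp [h, hAB', hA'B, hA'B', Set.univ_inter, Set.inter_univ, measure_univ]

lemma union_ite_form (C : Set Ω) (s : Set ℝ)
    (hd1 : Decidable ((1:ℝ) ∈ s)) (hd0 : Decidable ((0:ℝ) ∈ s)) :
    ((@ite _ ((1:ℝ) ∈ s) hd1 C ∅) ∪ (@ite _ ((0:ℝ) ∈ s) hd0 Cᶜ ∅)) = ∅ ∨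
    ((@ite _ ((1:ℝ) ∈ s) hd1 C ∅) ∪ (@ite _ ((0:ℝ) ∈ s) hd0 Cᶜ ∅)) = C ∨
    ((@ite _ ((1:ℝ) ∈ s) hd1 C ∅) ∪ (@ite _ ((0:ℝ) ∈ s) hd0 Cᶜ ∅)) = Cᶜ ∨
    ((@ite _ ((1:ℝ) ∈ s) hd1 C ∅) ∪ (@ite _ ((0:ℝ) ∈ s) hd0 Cᶜ ∅)) = Set.univ := by
  by_cases h1 : (1:ℝ) ∈ s <;> by_cases h0 : (0:ℝ) ∈ s
  · right; right; right; rw [if_pos h1, if_pos h0, Set.union_compl_self]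
  · right; left; rw [if_pos h1, if_neg h0, Set.union_empty]
  · right; right; left; rw [if_neg h1, if_pos h0, Set.empty_union]
  · left; rw [if_neg h1, if_neg h0, Set.union_empty]

lemma indepFun_indicator_of_measure_inter (hA : MeasurableSet A) (hB : MeasurableSet B)
    (h : μ (A ∩ B) = μ A * μ B) :
    IndepFun (A.indicator fun _ => (1:ℝ)) (B.indicator fun _ => (1:ℝ)) μ := by
  classical
  rw [IndepFun_iff_Indep, Indep_iff]
  intro t1 t2 ht1 ht2
  obtain ⟨s1, -, rfl⟩ := ht1
  obtain ⟨s2, -, rfl⟩ := ht2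
  rw [Set.indicator_const_preimage_eq_union, Set.indicator_const_preimage_eq_union]
  exact measure_inter_combo hA hB h _ _ (union_ite_form A s1 _ _) (union_ite_form B s2 _ _)

lemma identDistrib_indicator (hA : MeasurableSet A) (hB : MeasurableSet B) (h : μ A = μ B) :
    IdentDistrib (A.indicator fun _ => (1:ℝ)) (B.indicator fun _ => (1:ℝ)) μ μ := by
  classical
  refine ⟨(measurable_const.indicator hA).aemeasurable,
    (measurable_const.indicator hB).aemeasurable, ?_⟩
  apply Measure.ext
  intro s hs
  rw [Measure.map_apply (measurable_const.indicator hA) hs,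
    Measure.map_apply (measurable_const.indicator hB) hs,
    Set.indicator_const_preimage_eq_union, Set.indicator_const_preimage_eq_union]
  by_cases h1 : (1:ℝ) ∈ s <;> by_cases h0 : (0:ℝ) ∈ s <;>
    simp [h1, h0, measure_union (disjoint_compl_right) hA.compl,
      measure_union (disjoint_compl_right) hB.compl, prob_compl_eq_one_sub hA,
      prob_compl_eq_one_sub hB, h]

end Indicator

-- ================== measurability and determinedness of mark sets ==================

lemma det_Tm (i : E) (m t : ℕ) (ht : 1 ≤ t) : Det J S t {ω | Tm J i m ω = t} := by
  intro ω ω' h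
  have hV : ∀ n ≤ t, Vc J i n ω = Vc J i n ω' := Vc_congr h i
  simp only [Set.mem_setOf_eq, Tm_eq_iff ht]
  constructor
  · rintro ⟨h1, h2⟩
    exact ⟨by rw [← hV t le_rfl]; exact h1,
      fun n hn hc => h2 n hn ⟨hc.1, by rw [hV n (le_of_lt hn)]; exact hc.2⟩⟩
  · rintro ⟨h1, h2⟩
    exact ⟨by rw [hV t le_rfl]; exact h1,
      fun n hn hc => h2 n hn ⟨hc.1, by rw [← hV n (le_of_lt hn)]; exact hc.2⟩⟩

lemma meas_Tm (hJm : ∀ n i, MeasurableSet {ω | J n ω = i})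
    (hSm : ∀ n k, MeasurableSet {ω | S n ω = k}) (i : E) (m t : ℕ) :
    MeasurableSet {ω | Tm J i m ω = t} := by
  rcases t with _ | t
  · have : {ω | Tm J i m ω = 0} = (⋃ t : ℕ, {ω | Tm J i m ω = t + 1})ᶜ := by
      ext ω
      simp only [Set.mem_setOf_eq, Set.mem_compl_iff, Set.mem_iUnion]
      constructor
      · intro h
        rintro ⟨t, ht⟩
        omega
      · intro h
        by_contra hc
        exact h ⟨Tm J i m ω - 1, by omega⟩
    rw [this]
    exact (MeasurableSet.iUnion fun t =>
      det_measurable hJm hSm (det_Tm i m (t+1) (by omega))).compl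
  · exact det_measurable hJm hSm (det_Tm i m (t+1) (by omega))

lemma meas_markSet (hJm : ∀ n i, MeasurableSet {ω | J n ω = i})
    (hSm : ∀ n k, MeasurableSet {ω | S n ω = k}) (i j : E) (k m : ℕ) :
    MeasurableSet (markSet J S i j k m) := by
  have : markSet J S i j k m = ⋃ t : ℕ,
      ({ω | Tm J i m ω = t} ∩ ({ω | J t ω = j} ∩ {ω | Xproc S t ω = k})) := by
    ext ω
    simp only [markSet, Set.mem_setOf_eq, Set.mem_iUnion, Set.mem_inter_iff]
    constructor
    · intro h; exact ⟨Tm J i m ω, rfl, h.1, h.2⟩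
    · rintro ⟨t, rfl, h1, h2⟩; exact ⟨h1, h2⟩
  rw [this]
  exact MeasurableSet.iUnion fun t =>
    (meas_Tm hJm hSm i m t).inter ((hJm t j).inter (measX hSm t k))

lemma Vc_hits {i : E} {ω : Ω} {v t : ℕ} (hv : 1 ≤ v) (hVt : v ≤ Vc J i t ω) :
    ∃ n, 1 ≤ n ∧ n ≤ t ∧ Vc J i n ω = v := by
  have hunb : {n | v ≤ Vc J i n ω}.Nonempty := ⟨t, hVt⟩
  have hmem := Nat.sInf_mem hunb
  set n₀ := sInf {n | v ≤ Vc J i n ω} with hn₀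
  have hle : n₀ ≤ t := Nat.sInf_le hVt
  have h1 : 1 ≤ n₀ := by
    by_contra h
    have hz : n₀ = 0 := by omega
    rw [hz] at hmem
    simp only [Set.mem_setOf_eq, Vc_zero] at hmem
    omega
  have hprev : ¬ (v ≤ Vc J i (n₀ - 1) ω) := by
    intro hcon
    have h2 := Nat.sInf_le (s := {n | v ≤ Vc J i n ω})
      (show n₀ - 1 ∈ {n | v ≤ Vc J i n ω} from hcon)
    rw [← hn₀] at h2
    omega
  have hstep := Vc_le_succ (J := J) i (n₀ - 1) ω
  rw [Nat.sub_add_cancel h1] at hstep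
  have h3 : v ≤ Vc J i n₀ ω := hmem
  exact ⟨n₀, h1, hle, by omega⟩

lemma Tm_lt_of {i : E} {ω : Ω} {m m' t : ℕ} (hmm : m < m') (ht : 1 ≤ t)
    (h : Tm J i m' ω = t) : 1 ≤ Tm J i m ω ∧ Tm J i m ω < t := by
  rw [Tm_eq_iff ht] at h
  obtain ⟨hVt, -⟩ := h
  obtain ⟨n₁, hn1, hn2, hn3⟩ := Vc_hits (by omega : 1 ≤ m + 1)
    (show m + 1 ≤ Vc J i t ω by omega)
  have hne : {n | 1 ≤ n ∧ Vc J i n ω = m + 1}.Nonempty := ⟨n₁, hn1, hn3⟩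
  have hmem := Nat.sInf_mem hne
  have hle : Tm J i m ω ≤ n₁ := Nat.sInf_le ⟨hn1, hn3⟩
  have h1 : 1 ≤ Tm J i m ω := hmem.1
  have hVTm : Vc J i (Tm J i m ω) ω = m + 1 := hmem.2
  refine ⟨h1, ?_⟩
  rcases Nat.lt_or_ge (Tm J i m ω) t with h | h
  · exact h
  · have : Tm J i m ω = t := by omega
    rw [this, hVt] at hVTm
    omega

lemma PEq_mono {t t' : ℕ} (h : t ≤ t') {ω ω' : Ω} (hP : PEq J S t' ω ω') : PEq J S t ω ω' :=
  fun l hl => hP l (by omega)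

lemma det_mark_inter (i j : E) (k : ℕ) {m m' t : ℕ} (hmm : m < m') (ht : 1 ≤ t) :
    Det J S t (markSet J S i j k m ∩ {ω | Tm J i m' ω = t}) := by
  have main : ∀ ω ω', PEq J S t ω ω' →
      ω ∈ markSet J S i j k m ∩ {ω | Tm J i m' ω = t} →
      ω' ∈ markSet J S i j k m ∩ {ω | Tm J i m' ω = t} := by
    rintro ω ω' hPEq ⟨hmark, hTm'⟩
    simp only [Set.mem_setOf_eq] at hTm'
    obtain ⟨h1, h2⟩ := Tm_lt_of hmm ht hTm'
    set t₁ := Tm J i m ω with ht₁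
    have hTm1 : Tm J i m ω = t₁ := rfl
    have hTm1' : Tm J i m ω' = t₁ :=
      (det_Tm i m t₁ h1 ω ω' (PEq_mono (by omega) hPEq)).mp hTm1
    have hTmt' : Tm J i m' ω' = t := (det_Tm i m' t ht ω ω' hPEq).mp hTm'
    have hc := hPEq t₁ h2
    refine ⟨?_, hTmt'⟩
    simp only [markSet, Set.mem_setOf_eq] at hmark ⊢
    rw [hTm1', ← hc.1, ← hc.2]
    exact hmark
  intro ω ω' hPEq
  exact ⟨main ω ω' hPEq, main ω' ω (fun l hl => ⟨(hPEq l hl).1.symm, (hPEq l hl).2.symm⟩)⟩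

-- ================== law of the marks ==================

lemma Tm_null {q : E → E → ℕ → ℝ} {P : E → Measure Ω}
    (hchain : IsMarkovRenewalChain P J S q) (i : E)
    (hA1 : ∀ x : E, 0 < P x {ω | ∃ n, 1 ≤ n ∧ J n ω = i}) (y : E) (m : ℕ) :
    P y {ω | Tm J i m ω = 0} = 0 := by
  have hae := ae_visits hchain i hA1 y
  rw [ae_iff] at hae
  refine measure_mono_null ?_ hae
  intro ω hω
  simp only [Set.mem_setOf_eq] at hω ⊢
  intro hgood
  obtain ⟨t, ht1, ht2⟩ := exists_Tm i ω hgood m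
  omega

lemma Tm_union_univ (i : E) (m : ℕ) : (⋃ t : ℕ, {ω | Tm J i m ω = t}) = Set.univ := by
  ext ω
  simp only [Set.mem_iUnion, Set.mem_setOf_eq, Set.mem_univ, iff_true]
  exact ⟨Tm J i m ω, rfl⟩

lemma Tm_disjoint (i : E) (m : ℕ) :
    Pairwise (Function.onFun Disjoint (fun t : ℕ => {ω | Tm J i m ω = t})) := by
  intro t t' h
  rw [Function.onFun, Set.disjoint_left]
  rintro ω h1 h2
  simp only [Set.mem_setOf_eq] at h1 h2
  omega

lemma mark_prob {q : E → E → ℕ → ℝ} {P : E → Measure Ω}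
    (hchain : IsMarkovRenewalChain P J S q) (i j : E) (k : ℕ)
    (hA1 : ∀ x : E, 0 < P x {ω | ∃ n, 1 ≤ n ∧ J n ω = i}) (y : E) (m : ℕ) :
    P y (markSet J S i j k m) = ENNReal.ofReal (q i j k) := by
  have hJm := hchain.2.1
  have hSm := hchain.2.2.1
  haveI := hchain.1 y
  have hmeasT : ∀ t, MeasurableSet {ω | Tm J i m ω = t} := meas_Tm hJm hSm i m
  have hmeasS : ∀ t : ℕ, MeasurableSet {ω | J t ω = j ∧ Xproc S t ω = k} :=
    fun t => (hJm t j).inter (measX hSm t k)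
  have hdec : markSet J S i j k m =
      ⋃ t : ℕ, ({ω | Tm J i m ω = t} ∩ {ω | J t ω = j ∧ Xproc S t ω = k}) := by
    ext ω
    simp only [markSet, Set.mem_setOf_eq, Set.mem_iUnion, Set.mem_inter_iff]
    constructor
    · intro h; exact ⟨Tm J i m ω, rfl, h⟩
    · rintro ⟨t, rfl, h⟩; exact h
  have hterm : ∀ t : ℕ,
      P y ({ω | Tm J i m ω = t} ∩ {ω | J t ω = j ∧ Xproc S t ω = k}) =
        ENNReal.ofReal (q i j k) * P y {ω | Tm J i m ω = t} := by
    intro t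
    rcases t with _ | t
    · rw [measure_mono_null Set.inter_subset_left (Tm_null hchain i hA1 y m),
        Tm_null hchain i hA1 y m, mul_zero]
    · exact master_s3 hchain y i (by omega) (det_Tm i m (t+1) (by omega))
        (fun ω hω => Tm_endpoint (by omega) hω) j k
  rw [hdec, measure_iUnion (fun t t' h => ((Tm_disjoint i m h).mono
      Set.inter_subset_left Set.inter_subset_left))
    (fun t => (hmeasT t).inter (hmeasS t))]
  calc ∑' t, P y ({ω | Tm J i m ω = t} ∩ {ω | J t ω = j ∧ Xproc S t ω = k})
      = ∑' t, ENNReal.ofReal (q i j k) * P y {ω | Tm J i m ω = t} := tsum_congr hterm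
    _ = ENNReal.ofReal (q i j k) * ∑' t, P y {ω | Tm J i m ω = t} := ENNReal.tsum_mul_left
    _ = ENNReal.ofReal (q i j k) := by
        rw [← measure_iUnion (Tm_disjoint i m) hmeasT, Tm_union_univ, measure_univ, mul_one]

lemma mark_pair {q : E → E → ℕ → ℝ} {P : E → Measure Ω}
    (hchain : IsMarkovRenewalChain P J S q) (i j : E) (k : ℕ)
    (hA1 : ∀ x : E, 0 < P x {ω | ∃ n, 1 ≤ n ∧ J n ω = i}) (y : E) {m m' : ℕ} (hmm : m < m') :
    P y (markSet J S i j k m ∩ markSet J S i j k m') =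
      ENNReal.ofReal (q i j k) * P y (markSet J S i j k m) := by
  have hJm := hchain.2.1
  have hSm := hchain.2.2.1
  haveI := hchain.1 y
  have hmeasA := meas_markSet hJm hSm i j k m
  have hmeasT : ∀ t, MeasurableSet {ω | Tm J i m' ω = t} := meas_Tm hJm hSm i m'
  have hmeasS : ∀ t : ℕ, MeasurableSet {ω | J t ω = j ∧ Xproc S t ω = k} :=
    fun t => (hJm t j).inter (measX hSm t k)
  have hdec : markSet J S i j k m ∩ markSet J S i j k m' =
      ⋃ t : ℕ, ((markSet J S i j k m ∩ {ω | Tm J i m' ω = t}) ∩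
        {ω | J t ω = j ∧ Xproc S t ω = k}) := by
    ext ω
    simp only [Set.mem_iUnion, Set.mem_inter_iff, Set.mem_setOf_eq]
    constructor
    · rintro ⟨h1, h2⟩
      exact ⟨Tm J i m' ω, ⟨h1, rfl⟩, h2⟩
    · rintro ⟨t, ⟨h1, rfl⟩, h2⟩
      exact ⟨h1, h2⟩
  have hterm : ∀ t : ℕ,
      P y ((markSet J S i j k m ∩ {ω | Tm J i m' ω = t}) ∩
          {ω | J t ω = j ∧ Xproc S t ω = k}) =
        ENNReal.ofReal (q i j k) * P y (markSet J S i j k m ∩ {ω | Tm J i m' ω = t}) := by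
    intro t
    rcases t with _ | t
    · rw [measure_mono_null (Set.inter_subset_left.trans Set.inter_subset_right)
          (Tm_null hchain i hA1 y m'),
        measure_mono_null Set.inter_subset_right (Tm_null hchain i hA1 y m'), mul_zero]
    · exact master_s3 hchain y i (by omega) (det_mark_inter i j k hmm (by omega))
        (fun ω hω => Tm_endpoint (by omega) hω.2) j k
  rw [hdec, measure_iUnion (fun t t' h => (((Tm_disjoint i m' h).mono
      Set.inter_subset_right Set.inter_subset_right).mono
      Set.inter_subset_left Set.inter_subset_left))
    (fun t => (hmeasA.inter (hmeasT t)).inter (hmeasS t))]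
  calc ∑' t, P y ((markSet J S i j k m ∩ {ω | Tm J i m' ω = t}) ∩
        {ω | J t ω = j ∧ Xproc S t ω = k})
      = ∑' t, ENNReal.ofReal (q i j k) *
          P y (markSet J S i j k m ∩ {ω | Tm J i m' ω = t}) := tsum_congr hterm
    _ = ENNReal.ofReal (q i j k) *
          ∑' t, P y (markSet J S i j k m ∩ {ω | Tm J i m' ω = t}) := ENNReal.tsum_mul_left
    _ = ENNReal.ofReal (q i j k) * P y (markSet J S i j k m) := by
        rw [← measure_iUnion (fun t t' h => ((Tm_disjoint i m' h).mono
            Set.inter_subset_right Set.inter_subset_right))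
          (fun t => hmeasA.inter (hmeasT t)), ← Set.inter_iUnion, Tm_union_univ,
          Set.inter_univ]

/-- strong law of large numbers for the marks -/
lemma slln_marks {q : E → E → ℕ → ℝ} {P : E → Measure Ω} (hq : IsSemiMarkovKernel q)
    (hchain : IsMarkovRenewalChain P J S q) (i j : E) (k : ℕ)
    (hA1 : ∀ x : E, 0 < P x {ω | ∃ n, 1 ≤ n ∧ J n ω = i}) (y : E) :
    ∀ᵐ ω ∂(P y), Tendsto (fun n : ℕ => (∑ m ∈ Finset.range n, xi J S i j k m ω) / n)
      atTop (𝓝 (q i j k)) := by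
  have hJm := hchain.2.1
  have hSm := hchain.2.2.1
  haveI := hchain.1 y
  have hmeasA : ∀ m, MeasurableSet (markSet J S i j k m) := meas_markSet hJm hSm i j k
  have hprob : ∀ m, P y (markSet J S i j k m) = ENNReal.ofReal (q i j k) :=
    mark_prob hchain i j k hA1 y
  have hint : Integrable (xi J S i j k 0) (P y) := by
    unfold xi
    exact (integrable_const (1:ℝ)).indicator (hmeasA 0)
  have hindep : Pairwise (Function.onFun (IndepFun · · (P y)) (xi J S i j k)) := by
    have base : ∀ a b, a < b → IndepFun (xi J S i j k a) (xi J S i j k b) (P y) := by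
      intro a b hab
      apply indepFun_indicator_of_measure_inter (hmeasA a) (hmeasA b)
      rw [mark_pair hchain i j k hA1 y hab, hprob b, mul_comm]
    intro m m' hne
    rcases hne.lt_or_gt with h | h
    · exact base m m' h
    · exact (base m' m h).symm
  have hident : ∀ m, IdentDistrib (xi J S i j k m) (xi J S i j k 0) (P y) (P y) :=
    fun m => identDistrib_indicator (hmeasA m) (hmeasA 0) (by rw [hprob m, hprob 0])
  have hsl := strong_law_ae_real _ hint hindep hident
  have hE : (P y)[xi J S i j k 0] = q i j k := by
    unfold xi
    rw [integral_indicator_const (1:ℝ) (hmeasA 0), measureReal_def, hprob 0, smul_eq_mul, mul_one,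
      ENNReal.toReal_ofReal (hq.1 i j k)]
  rwa [hE] at hsl

end PartB

/-- Strong consistency of the estimator of the matrix convolution inverse
(Barbu–Limnios, Theorem 4.4). -/
theorem statement3 (q : E → E → ℕ → ℝ) (P : E → Measure Ω) (J : ℕ → Ω → E) (S : ℕ → Ω → ℕ)
    (hq : IsSemiMarkovKernel q) (hchain : IsMarkovRenewalChain P J S q)
    (hA : AssumptionA P J S) (i₀ : E) :
    ∀ᵐ ω ∂(P i₀), ∀ (i j : E) (k : ℕ),
      Tendsto (fun M : ℕ => psiOf (qhat J S M ω) i j k) atTop (𝓝 (psiOf q i j k)) := by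
  obtain ⟨hA1, -, -⟩ := hA
  have hJm := hchain.2.1
  have hSm := hchain.2.2.1
  have hinit := hchain.2.2.2.1
  haveI := hchain.1 i₀
  -- the almost sure events
  have hX0 : ∀ᵐ ω ∂(P i₀), ∀ n : ℕ, Xproc S (n+1) ω ≠ 0 := ae_X_pos hchain hq.2.1 i₀
  have hS0 : ∀ᵐ ω ∂(P i₀), S 0 ω = 0 := by
    have hae : ∀ᵐ ω ∂(P i₀), J 0 ω = i₀ ∧ S 0 ω = 0 := by
      rw [ae_iff]
      have hm : MeasurableSet {ω | J 0 ω = i₀ ∧ S 0 ω = 0} := (hJm 0 i₀).inter (hSm 0 0)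
      have hc : {ω | ¬(J 0 ω = i₀ ∧ S 0 ω = 0)} = {ω | J 0 ω = i₀ ∧ S 0 ω = 0}ᶜ := rfl
      rw [hc, prob_compl_eq_zero_iff hm]
      exact hinit i₀
    filter_upwards [hae] with ω h using h.2
  have hvis : ∀ᵐ ω ∂(P i₀), ∀ i : E, ∀ n : ℕ, ∃ l, n + 1 ≤ l ∧ J l ω = i := by
    rw [ae_all_iff]
    exact fun i => ae_visits hchain i (fun x => hA1 x i) i₀
  have hslln : ∀ᵐ ω ∂(P i₀), ∀ e : E × E × ℕ,
      Tendsto (fun n : ℕ => (∑ m ∈ Finset.range n, xi J S e.1 e.2.1 e.2.2 m ω) / n)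
        atTop (𝓝 (q e.1 e.2.1 e.2.2)) := by
    rw [ae_all_iff]
    exact fun e => slln_marks hq hchain e.1 e.2.1 e.2.2 (fun x => hA1 x e.1) i₀
  filter_upwards [hX0, hS0, hvis, hslln] with ω hX0ω hS0ω hvisω hsllnω
  -- on the good set, the estimator entries converge and vanish at 0
  have hq0 : ∀ (M : ℕ) (i j : E), qhat J S M ω i j 0 = 0 := by
    intro M i j
    unfold qhat
    rw [Finset.sum_eq_zero, zero_div]
    intro n hn
    simp only [Finset.mem_Icc] at hn
    rw [if_neg]
    rintro ⟨-, -, hXn⟩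
    have h' := hX0ω (n - 1)
    rw [Nat.sub_add_cancel hn.1] at h'
    exact h' hXn
  have htend : ∀ (i j : E) (k : ℕ),
      Tendsto (fun M => qhat J S M ω i j k) atTop (𝓝 (q i j k)) := by
    intro i j k
    have hkey : ∀ M : ℕ, qhat J S M ω i j k =
        (fun n : ℕ => (∑ m ∈ Finset.range n, xi J S i j k m ω) / n)
          (Vc J i (Ncnt S M ω) ω) := by
      intro M
      unfold qhat
      rw [key_sum i j k ω (Ncnt S M ω)]
      rfl
    simp only [hkey]
    exact (hsllnω (i, j, k)).comp
      ((Vc_tendsto i ω (hvisω i)).comp (Ncnt_tendsto ω hS0ω hX0ω))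
  intro i j k
  exact tendsto_psiOf (fun i' j' k' => htend i' j' k') (fun M i' j' => hq0 M i' j')
    hq.2.1 i j k

end SMCPaper
end
end
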